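/- arXiv:1611.03395 — 9 statements merged into one kernel-verified Lean document; each statement's English description precedes it below -/
import Mathlib

section
/- Let (d_n), (ε_n), (λ_n) be sequences of nonnegative real numbers such that for some N and all n ≥ N one has d_{n+1} ≤ λ_n · max(d_n, ε_n). Assume that sup over all pairs k ≤ n of the products ∏_{i=k}^n λ_i is finite, and that for every fixed k the products ∏_{i=k}^n λ_i tend to 0 as n → ∞. Set q_k = sup_{n ≥ k} ∏_{i=k}^n λ_i. Then limsup_{k→∞} (d_k · q_k) ≤ limsup_{k→∞} (ε_k · q_k), where the limsups are taken in [0,∞]. -/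
open Filter Finset

/-- Let `(d_n)`, `(ε_n)`, `(λ_n)` be nonnegative real sequences with
`d_{n+1} ≤ λ_n · max(d_n, ε_n)` for all `n ≥ N`, such that the products `∏_{i=k}^n λ_i`
are uniformly bounded and, for each fixed `k`, tend to `0` as `n → ∞`.  With
`q_k = sup_{n ≥ k} ∏_{i=k}^n λ_i`, one has
`limsup (d_k q_k) ≤ limsup (ε_k q_k)` in `[0,∞]`. -/
theorem stmt_0 (d ε l : ℕ → ℝ)
    (hd : ∀ n, 0 ≤ d n) (hε : ∀ n, 0 ≤ ε n) (hl : ∀ n, 0 ≤ l n)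
    (N : ℕ) (hrec : ∀ n, N ≤ n → d (n + 1) ≤ l n * max (d n) (ε n))
    (C : ℝ) (hC : ∀ k n, k ≤ n → ∏ i ∈ Finset.Icc k n, l i ≤ C)
    (hlim : ∀ k, Tendsto (fun n => ∏ i ∈ Finset.Icc k n, l i) atTop (nhds 0))
    (q : ℕ → ℝ) (hq : ∀ k, q k = ⨆ n : ℕ, ∏ i ∈ Finset.Icc k (k + n), l i) :
    Filter.limsup (fun k => ENNReal.ofReal (d k * q k)) atTop ≤
      Filter.limsup (fun k => ENNReal.ofReal (ε k * q k)) atTop := by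
  have hpn : ∀ s : Finset ℕ, 0 ≤ ∏ i ∈ s, l i := fun s =>
    Finset.prod_nonneg fun i _ => hl i
  have hbdd : ∀ k, BddAbove (Set.range fun n : ℕ => ∏ i ∈ Finset.Icc k (k + n), l i) := by
    intro k
    exact ⟨C, by rintro x ⟨n, rfl⟩; exact hC k (k + n) (Nat.le_add_right _ _)⟩
  have hq0 : ∀ k, 0 ≤ q k := by
    intro k
    rw [hq k]
    calc (0 : ℝ) ≤ ∏ i ∈ Finset.Icc k (k + 0), l i := hpn _
      _ ≤ _ := le_ciSup (hbdd k) 0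
  have hqC : ∀ k, q k ≤ C := by
    intro k
    rw [hq k]
    exact ciSup_le fun n => hC k (k + n) (Nat.le_add_right _ _)
  have hge : ∀ k n, k ≤ n → (∏ i ∈ Finset.Icc k n, l i) ≤ q k := by
    intro k n hkn
    rw [hq k]
    have h := le_ciSup (hbdd k) (n - k)
    rwa [Nat.add_sub_cancel' hkn] at h
  -- submultiplicativity: ∏_{[j,n)} λ · q n ≤ q j
  have hsub : ∀ j n, j < n → (∏ i ∈ Finset.Ico j n, l i) * q n ≤ q j := by
    intro j n hjn
    rw [hq n, Real.mul_iSup_of_nonneg (hpn _)]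
    apply ciSup_le
    intro m
    have heq : (∏ i ∈ Finset.Ico j n, l i) * ∏ i ∈ Finset.Icc n (n + m), l i
        = ∏ i ∈ Finset.Icc j (n + m), l i := by
      rw [← Finset.Ico_add_one_right_eq_Icc n (n + m), ← Finset.Ico_add_one_right_eq_Icc j (n + m),
        Finset.prod_Ico_consecutive _ (le_of_lt hjn) (by omega)]
    rw [heq]
    exact hge j (n + m) (by omega)
  -- the key unrolling estimate
  have claimE : ∀ (B : ℝ) (k : ℕ), N ≤ k → ∀ (m : ℕ) (c : ℝ), 0 ≤ c →
      (∀ j, k ≤ j → j < k + m → c * (∏ i ∈ Finset.Ico j (k + m), l i) * ε j ≤ B) →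
      c * d (k + m) ≤ max (c * (∏ i ∈ Finset.Ico k (k + m), l i) * d k) B := by
    intro B k hk m
    induction m with
    | zero =>
      intro c hc _
      simp only [Nat.add_zero, Finset.Ico_self, Finset.prod_empty, mul_one]
      exact le_max_left _ _
    | succ m ih =>
      intro c hc h
      have hkm : N ≤ k + m := by omega
      have step : c * d (k + (m + 1)) ≤ (c * l (k + m)) * max (d (k + m)) (ε (k + m)) := by
        have := hrec (k + m) hkm
        calc c * d (k + (m + 1)) = c * d ((k + m) + 1) := by ring_nf
          _ ≤ c * (l (k + m) * max (d (k + m)) (ε (k + m))) :=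
              mul_le_mul_of_nonneg_left this hc
          _ = (c * l (k + m)) * max (d (k + m)) (ε (k + m)) := by ring
      have hc' : 0 ≤ c * l (k + m) := mul_nonneg hc (hl _)
      rw [mul_max_of_nonneg _ _ hc'] at step
      refine step.trans (max_le ?_ ?_)
      · -- use the induction hypothesis with c' = c * l (k+m)
        have hmain := ih (c * l (k + m)) hc' ?_
        · refine hmain.trans (max_le ?_ (le_max_right _ _))
          refine le_trans (le_of_eq ?_) (le_max_left _ _)
          rw [show k + (m + 1) = (k + m) + 1 from rfl,
            Finset.prod_Ico_succ_top (Nat.le_add_right _ _)]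
          ring
        · intro j hj1 hj2
          have hj2' : j < k + (m + 1) := by omega
          have := h j hj1 hj2'
          refine le_trans (le_of_eq ?_) this
          rw [show k + (m + 1) = (k + m) + 1 from rfl,
            Finset.prod_Ico_succ_top (by omega : j ≤ k + m)]
          ring
      · -- the ε-term
        have := h (k + m) (Nat.le_add_right _ _) (by omega)
        refine le_trans (le_trans (le_of_eq ?_) this) (le_max_right _ _)
        rw [show k + (m + 1) = (k + m) + 1 from rfl,
          Finset.prod_Ico_succ_top (le_refl (k + m)), Finset.Ico_self,
          Finset.prod_empty, one_mul]
  -- products over Ico tend to 0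
  have hlimIco : ∀ k, Tendsto (fun n => ∏ i ∈ Finset.Ico k n, l i) atTop (nhds 0) := by
    intro k
    apply (tendsto_add_atTop_iff_nat 1).mp
    have : (fun n => ∏ i ∈ Finset.Ico k (n + 1), l i)
        = fun n => ∏ i ∈ Finset.Icc k n, l i := by
      funext n; rw [Finset.Ico_add_one_right_eq_Icc]
    rw [this]
    exact hlim k
  -- main reduction
  suffices H : ∀ r : ℝ, 0 < r → (∀ᶠ k in atTop, ε k * q k ≤ r) →
      Filter.limsup (fun k => ENNReal.ofReal (d k * q k)) atTop ≤ ENNReal.ofReal r by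
    refine le_of_forall_gt_imp_ge_of_dense ?_
    intro c hc
    rcases eq_or_ne c ⊤ with rfl | hct
    · exact le_top
    have hc0 : 0 < c := lt_of_le_of_lt zero_le hc
    have hr0 : 0 < c.toReal := ENNReal.toReal_pos (ne_of_gt hc0) hct
    have hev : ∀ᶠ k in atTop, ε k * q k ≤ c.toReal := by
      filter_upwards [eventually_lt_of_limsup_lt hc] with k hk
      have : (ENNReal.ofReal (ε k * q k)).toReal ≤ c.toReal :=
        ENNReal.toReal_mono hct (le_of_lt hk)
      rwa [ENNReal.toReal_ofReal (mul_nonneg (hε k) (hq0 k))] at this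
    have := H c.toReal hr0 hev
    rwa [ENNReal.ofReal_toReal hct] at this
  intro r hr hev
  obtain ⟨K, hK⟩ := eventually_atTop.mp hev
  set k0 := max K N with hk0
  have hk0N : N ≤ k0 := le_max_right _ _
  -- pointwise bound for n ≥ k0
  have hbound : ∀ n, k0 ≤ n →
      d n * q n ≤ max ((∏ i ∈ Finset.Ico k0 n, l i) * C * d k0) r := by
    intro n hn
    have hmain := claimE r k0 hk0N (n - k0) (q n) (hq0 n) ?_
    · rw [Nat.add_sub_cancel' hn] at hmain
      rw [mul_comm (d n) (q n)]
      refine hmain.trans (max_le ?_ (le_max_right _ _))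
      refine le_trans ?_ (le_max_left _ _)
      have : q n * (∏ i ∈ Finset.Ico k0 n, l i) ≤ (∏ i ∈ Finset.Ico k0 n, l i) * C := by
        rw [mul_comm]
        exact mul_le_mul_of_nonneg_left (hqC n) (hpn _)
      exact mul_le_mul_of_nonneg_right this (hd k0)
    · intro j hj1 hj2
      rw [Nat.add_sub_cancel' hn] at hj2 ⊢
      have h1 : q n * (∏ i ∈ Finset.Ico j n, l i) ≤ q j := by
        rw [mul_comm]; exact hsub j n hj2
      calc q n * (∏ i ∈ Finset.Ico j n, l i) * ε j ≤ q j * ε j :=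
            mul_le_mul_of_nonneg_right h1 (hε j)
        _ = ε j * q j := mul_comm _ _
        _ ≤ r := hK j (le_trans (le_max_left _ _) hj1)
  -- the transient term is eventually small
  have htend : Tendsto (fun n => (∏ i ∈ Finset.Ico k0 n, l i) * C * d k0) atTop (nhds 0) := by
    have := (hlimIco k0).mul_const (C * d k0)
    simpa [mul_assoc] using this
  have hsmall : ∀ᶠ n in atTop, (∏ i ∈ Finset.Ico k0 n, l i) * C * d k0 ≤ r := by
    filter_upwards [htend.eventually (eventually_lt_nhds hr)] with n hn
    exact le_of_lt hn
  have hfin : ∀ᶠ n in atTop, ENNReal.ofReal (d n * q n) ≤ ENNReal.ofReal r := by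
    filter_upwards [eventually_ge_atTop k0, hsmall] with n hn hs
    exact ENNReal.ofReal_le_ofReal ((hbound n hn).trans (max_le hs le_rfl))
  exact limsup_le_of_le (by isBoundedDefault) hfin
end

section
/- Let (μ_n)_{n≥0} be a normal sequence. Let (x_n)_{n≥0} and (b_n)_{n≥0} be sequences of nonnegative real numbers satisfying the recursion x_{n+1} = (1 − μ_n) x_n + μ_n b_n for all n ≥ 0. Then liminf_{n→∞} b_n ≤ liminf_{n→∞} x_n and limsup_{n→∞} x_n ≤ limsup_{n→∞} b_n (limits taken in [0,∞]). -/
open Filter Finset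

/-- A sequence `(μ_n)` is *normal* if `μ_0 = 1`, `μ_n ∈ (0,1)` for `n ≥ 1`,
`∑ μ_n = ∞`, and `μ_n → 0`. -/
def NormalSeq (μ : ℕ → ℝ) : Prop :=
  μ 0 = 1 ∧ (∀ n, 1 ≤ n → μ n ∈ Set.Ioo (0 : ℝ) 1) ∧
    Filter.Tendsto (fun n => ∑ i ∈ Finset.range n, μ i) Filter.atTop Filter.atTop ∧
    Filter.Tendsto μ Filter.atTop (nhds 0)


lemma myprod_tendsto (μ : ℕ → ℝ) (h0 : ∀ n, 0 ≤ μ n) (h1 : ∀ n, μ n ≤ 1)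
    (hsum : Tendsto (fun n => ∑ i ∈ Finset.range n, μ i) atTop atTop) (N : ℕ) :
    Tendsto (fun k => ∏ i ∈ Finset.range k, (1 - μ (N + i))) atTop (nhds 0) := by
  have hrw : ∀ k, ∑ i ∈ Finset.range k, μ (N + i)
      = (∑ i ∈ Finset.range (N + k), μ i) - ∑ i ∈ Finset.range N, μ i := by
    intro k; rw [Finset.sum_range_add]; ring
  have hSum : Tendsto (fun k => ∑ i ∈ Finset.range k, μ (N + i)) atTop atTop := by
    simp only [hrw]
    have h2 : Tendsto (fun k => (∑ i ∈ Finset.range (k + N), μ i)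
        + -(∑ i ∈ Finset.range N, μ i)) atTop atTop :=
      (hsum.comp (tendsto_add_atTop_nat N)).atTop_add tendsto_const_nhds
    exact h2.congr (fun k => by rw [Nat.add_comm]; ring)
  have hexp : Tendsto (fun k => Real.exp (-(∑ i ∈ Finset.range k, μ (N + i)))) atTop (nhds 0) :=
    Real.tendsto_exp_neg_atTop_nhds_zero.comp hSum
  apply squeeze_zero (fun k => Finset.prod_nonneg fun i _ => by linarith [h1 (N + i)]) _ hexp
  intro k
  calc ∏ i ∈ Finset.range k, (1 - μ (N + i))
      ≤ ∏ i ∈ Finset.range k, Real.exp (-(μ (N + i))) := by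
        apply Finset.prod_le_prod (fun i _ => by linarith [h1 (N + i)])
        intro i _
        linarith [Real.add_one_le_exp (-(μ (N + i)))]
    _ = Real.exp (-(∑ i ∈ Finset.range k, μ (N + i))) := by
        rw [← Real.exp_sum]; simp

lemma key_up (μ x b : ℕ → ℝ) (h0 : ∀ n, 0 ≤ μ n) (h1 : ∀ n, μ n ≤ 1)
    (hrec : ∀ n, x (n + 1) = (1 - μ n) * x n + μ n * b n)
    (N : ℕ) (c : ℝ) (hbc : ∀ n, N ≤ n → b n ≤ c) :
    ∀ k, x (N + k) ≤ c + (∏ i ∈ Finset.range k, (1 - μ (N + i))) * (x N - c) := by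
  intro k
  induction k with
  | zero => simp
  | succ k ih =>
    have h0' := h0 (N + k)
    have h1' := h1 (N + k)
    have hb' := hbc (N + k) (Nat.le_add_right N k)
    have := hrec (N + k)
    rw [Finset.prod_range_succ]
    have : x (N + (k + 1)) = (1 - μ (N + k)) * x (N + k) + μ (N + k) * b (N + k) := by
      rw [← hrec (N + k)]; ring_nf
    nlinarith [this, ih]

theorem stmt_1' (μ x b : ℕ → ℝ)
    (hμ0 : μ 0 = 1) (hμI : ∀ n, 1 ≤ n → μ n ∈ Set.Ioo (0 : ℝ) 1)
    (hsum : Tendsto (fun n => ∑ i ∈ Finset.range n, μ i) atTop atTop)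
    (hx : ∀ n, 0 ≤ x n) (hb : ∀ n, 0 ≤ b n)
    (hrec : ∀ n, x (n + 1) = (1 - μ n) * x n + μ n * b n) :
    Filter.liminf (fun n => ENNReal.ofReal (b n)) Filter.atTop ≤
        Filter.liminf (fun n => ENNReal.ofReal (x n)) Filter.atTop ∧
      Filter.limsup (fun n => ENNReal.ofReal (x n)) Filter.atTop ≤
        Filter.limsup (fun n => ENNReal.ofReal (b n)) Filter.atTop := by
  have h0 : ∀ n, 0 ≤ μ n := by
    intro n; rcases Nat.eq_zero_or_pos n with h | h
    · simp [h, hμ0]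
    · exact (hμI n h).1.le
  have h1 : ∀ n, μ n ≤ 1 := by
    intro n; rcases Nat.eq_zero_or_pos n with h | h
    · simp [h, hμ0]
    · exact (hμI n h).2.le
  have key_down : ∀ (N : ℕ) (c : ℝ), (∀ n, N ≤ n → c ≤ b n) → ∀ k,
      c + (∏ i ∈ Finset.range k, (1 - μ (N + i))) * (x N - c) ≤ x (N + k) := by
    intro N c hbc k
    have h := key_up μ (fun n => -x n) (fun n => -b n) h0 h1
      (fun n => by show -x (n + 1) = _; rw [hrec n]; ring) N (-c)
      (fun n hn => by simpa using hbc n hn) k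
    simp only [neg_sub_neg] at h
    have hP : (∏ i ∈ Finset.range k, (1 - μ (N + i))) * (c - x N)
        = -((∏ i ∈ Finset.range k, (1 - μ (N + i))) * (x N - c)) := by ring
    rw [hP] at h; linarith
  -- eventual bounds
  have up : ∀ c : ℝ, (∀ᶠ n in atTop, b n ≤ c) → ∀ ε : ℝ, 0 < ε →
      ∀ᶠ n in atTop, x n ≤ c + ε := by
    intro c hc ε hε
    obtain ⟨N, hN⟩ := eventually_atTop.mp hc
    have hP2 : Tendsto (fun k => (∏ i ∈ Finset.range k, (1 - μ (N + i))) * (x N - c))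
        atTop (nhds 0) := by
      simpa using (myprod_tendsto μ h0 h1 hsum N).mul_const (x N - c)
    obtain ⟨K, hK⟩ := eventually_atTop.mp (hP2.eventually_lt_const hε)
    rw [eventually_atTop]
    refine ⟨N + K, fun n hn => ?_⟩
    obtain ⟨k, rfl⟩ : ∃ k, n = N + k := ⟨n - N, by omega⟩
    have hk : K ≤ k := by omega
    have h := key_up μ x b h0 h1 hrec N c hN k
    linarith [hK k hk]
  have down : ∀ c : ℝ, (∀ᶠ n in atTop, c ≤ b n) → ∀ ε : ℝ, 0 < ε →
      ∀ᶠ n in atTop, c - ε ≤ x n := by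
    intro c hc ε hε
    obtain ⟨N, hN⟩ := eventually_atTop.mp hc
    have hP2 : Tendsto (fun k => (∏ i ∈ Finset.range k, (1 - μ (N + i))) * (x N - c))
        atTop (nhds 0) := by
      simpa using (myprod_tendsto μ h0 h1 hsum N).mul_const (x N - c)
    obtain ⟨K, hK⟩ := eventually_atTop.mp (hP2.eventually_const_lt (neg_lt_zero.mpr hε))
    rw [eventually_atTop]
    refine ⟨N + K, fun n hn => ?_⟩
    obtain ⟨k, rfl⟩ : ∃ k, n = N + k := ⟨n - N, by omega⟩
    have hk : K ≤ k := by omega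
    have h := key_down N c hN k
    linarith [hK k hk]
  constructor
  · -- liminf b ≤ liminf x
    by_contra hcon
    push_neg at hcon
    obtain ⟨u, hu1, hu2⟩ := exists_between hcon
    have hufin : u ≠ ⊤ := hu2.ne_top
    have hev : ∀ᶠ n in atTop, u.toReal ≤ b n := by
      filter_upwards [eventually_lt_of_lt_liminf hu2] with n h
      have := ENNReal.toReal_mono ENNReal.ofReal_ne_top h.le
      rwa [ENNReal.toReal_ofReal (hb n)] at this
    have hmain : ∀ δ : NNReal, 0 < δ →
        u ≤ Filter.liminf (fun n => ENNReal.ofReal (x n)) Filter.atTop + δ := by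
      intro δ hδ
      have hδ' : (0 : ℝ) < δ := hδ
      have h3 : ENNReal.ofReal (u.toReal - δ) ≤
          Filter.liminf (fun n => ENNReal.ofReal (x n)) Filter.atTop := by
        refine le_liminf_of_le (by isBoundedDefault) ?_
        filter_upwards [down u.toReal hev δ hδ'] with n h
        exact ENNReal.ofReal_le_ofReal h
      calc u = ENNReal.ofReal ((u.toReal - δ) + δ) := by
              rw [sub_add_cancel, ENNReal.ofReal_toReal hufin]
        _ ≤ ENNReal.ofReal (u.toReal - δ) + ENNReal.ofReal δ := ENNReal.ofReal_add_le
        _ ≤ _ := by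
              rw [ENNReal.ofReal_coe_nnreal]
              exact add_le_add_left h3 _
    exact absurd (ENNReal.le_of_forall_pos_le_add fun δ hδ _ => hmain δ hδ)
      (not_le.mpr hu1)
  · -- limsup x ≤ limsup b
    set T := Filter.limsup (fun n => ENNReal.ofReal (b n)) Filter.atTop with hT
    rcases eq_or_ne T ⊤ with hTtop | hTtop
    · rw [hTtop]; exact le_top
    apply ENNReal.le_of_forall_pos_le_add
    intro ε hε _
    have hfin : T + ε ≠ ⊤ := by
      simp [hTtop, ENNReal.coe_ne_top]
    have hlt : T < T + ε := ENNReal.lt_add_right hTtop (by exact_mod_cast hε.ne')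
    have hev : ∀ᶠ n in atTop, b n ≤ (T + ε).toReal := by
      filter_upwards [eventually_lt_of_limsup_lt hlt] with n h
      have := ENNReal.toReal_mono hfin h.le
      rwa [ENNReal.toReal_ofReal (hb n)] at this
    apply ENNReal.le_of_forall_pos_le_add
    intro δ hδ _
    have hδ' : (0 : ℝ) < δ := hδ
    have h3 : Filter.limsup (fun n => ENNReal.ofReal (x n)) Filter.atTop ≤
        ENNReal.ofReal ((T + ε).toReal + δ) := by
      refine limsup_le_of_le (by isBoundedDefault) ?_
      filter_upwards [up (T + ε).toReal hev δ hδ'] with n h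
      exact ENNReal.ofReal_le_ofReal h
    calc Filter.limsup (fun n => ENNReal.ofReal (x n)) Filter.atTop
        ≤ ENNReal.ofReal ((T + ε).toReal + δ) := h3
      _ ≤ ENNReal.ofReal ((T + ε).toReal) + ENNReal.ofReal δ := ENNReal.ofReal_add_le
      _ = (T + ε) + δ := by rw [ENNReal.ofReal_toReal hfin, ENNReal.ofReal_coe_nnreal]


/-- For a normal sequence `(μ_n)` and nonnegative sequences `(x_n)`, `(b_n)`
satisfying `x_{n+1} = (1 − μ_n) x_n + μ_n b_n`, one has
`liminf b ≤ liminf x` and `limsup x ≤ limsup b` in `[0,∞]`. -/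
theorem stmt_1 (μ x b : ℕ → ℝ) (hμ : NormalSeq μ)
    (hx : ∀ n, 0 ≤ x n) (hb : ∀ n, 0 ≤ b n)
    (hrec : ∀ n, x (n + 1) = (1 - μ n) * x n + μ n * b n) :
    Filter.liminf (fun n => ENNReal.ofReal (b n)) Filter.atTop ≤
        Filter.liminf (fun n => ENNReal.ofReal (x n)) Filter.atTop ∧
      Filter.limsup (fun n => ENNReal.ofReal (x n)) Filter.atTop ≤
        Filter.limsup (fun n => ENNReal.ofReal (b n)) Filter.atTop := by
  obtain ⟨hμ0, hμI, hsum, -⟩ := hμ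
  exact stmt_1' μ x b hμ0 hμI hsum hx hb hrec
end

section
/- Let (μ_n)_{n≥0} be a normal sequence, and let (x_n)_{n≥0} and (b_n)_{n≥0} be real sequences such that for some N and all n ≥ N one has x_{n+1} = (1 − μ_n) x_n + μ_n b_n. Then the series ∑_{n≥0} μ_n b_n converges if and only if x_n → 0 as n → ∞ and the series ∑_{n≥0} μ_n x_n converges. -/
open Filter Finset

lemma prod_tendsto_zero (μ : ℕ → ℝ) (h0 : ∀ n, 0 ≤ μ n) (h1 : ∀ n, μ n ≤ 1)
    (hsum : Tendsto (fun n => ∑ i ∈ range n, μ i) atTop atTop) (M : ℕ) :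
    Tendsto (fun n => ∏ k ∈ Ico M n, (1 - μ k)) atTop (nhds 0) := by
  have hexp : Tendsto (fun n => Real.exp (-((∑ i ∈ range n, μ i) + -(∑ i ∈ range M, μ i))))
      atTop (nhds 0) := by
    apply Real.tendsto_exp_atBot.comp
    exact tendsto_neg_atTop_atBot.comp
      (tendsto_atTop_add_const_right atTop (-(∑ i ∈ range M, μ i)) hsum)
  apply tendsto_of_tendsto_of_tendsto_of_le_of_le' tendsto_const_nhds hexp
  · filter_upwards with n
    exact Finset.prod_nonneg (fun i _ => by linarith [h1 i])
  · filter_upwards [eventually_ge_atTop M] with n hn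
    have hstep : ∏ k ∈ Ico M n, (1 - μ k) ≤ ∏ k ∈ Ico M n, Real.exp (-μ k) := by
      apply Finset.prod_le_prod
      · intro i _; linarith [h1 i]
      · intro i _; have := Real.add_one_le_exp (-μ i); linarith
    calc ∏ k ∈ Ico M n, (1 - μ k) ≤ ∏ k ∈ Ico M n, Real.exp (-μ k) := hstep
      _ = Real.exp (∑ k ∈ Ico M n, -μ k) := (Real.exp_sum _ _).symm
      _ = Real.exp (-((∑ i ∈ range n, μ i) + -(∑ i ∈ range M, μ i))) := by
          rw [Finset.sum_neg_distrib, Finset.sum_Ico_eq_sub _ hn]; ring_nf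

/-- Standard lemma: `a_{n+1} ≤ (1-μ_n) a_n + μ_n c_n` with `c_n → 0` forces `a_n → 0`. -/
lemma rec_tendsto_zero (μ a c : ℕ → ℝ) (h0 : ∀ n, 0 ≤ μ n) (h1 : ∀ n, μ n ≤ 1)
    (hsum : Tendsto (fun n => ∑ i ∈ range n, μ i) atTop atTop)
    (ha : ∀ n, 0 ≤ a n) (hc : Tendsto c atTop (nhds 0)) (N : ℕ)
    (hrec : ∀ n, N ≤ n → a (n + 1) ≤ (1 - μ n) * a n + μ n * c n) :
    Tendsto a atTop (nhds 0) := by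
  rw [Metric.tendsto_atTop]
  intro ε hε
  obtain ⟨M₀, hM₀⟩ := (Metric.tendsto_atTop.mp hc (ε / 2) (by linarith))
  set M := max M₀ N with hM
  have hbound : ∀ n, M ≤ n → a n ≤ ε / 2 + (∏ k ∈ Ico M n, (1 - μ k)) * a M := by
    intro n hn
    induction n, hn using Nat.le_induction with
    | base => simp; linarith
    | succ n hn ih =>
      have hcn : c n ≤ ε / 2 := by
        have := hM₀ n (le_trans (le_max_left _ _) hn)
        rw [Real.dist_eq, sub_zero] at this
        exact le_of_lt (lt_of_abs_lt this)
      have h1n : 0 ≤ 1 - μ n := by linarith [h1 n]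
      have := hrec n (le_trans (le_max_right _ _) hn)
      have hP : (0:ℝ) ≤ ∏ k ∈ Ico M n, (1 - μ k) :=
        Finset.prod_nonneg (fun i _ => by linarith [h1 i])
      have hIco : ∏ k ∈ Ico M (n+1), (1 - μ k) = (∏ k ∈ Ico M n, (1 - μ k)) * (1 - μ n) := by
        rw [Finset.prod_Ico_succ_top hn]
      calc a (n+1) ≤ (1 - μ n) * a n + μ n * c n := this
        _ ≤ (1 - μ n) * (ε / 2 + (∏ k ∈ Ico M n, (1 - μ k)) * a M) + μ n * c n := by
            apply add_le_add_left; exact mul_le_mul_of_nonneg_left ih h1n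
        _ ≤ ε / 2 + (∏ k ∈ Ico M (n+1), (1 - μ k)) * a M := by
            rw [hIco]
            have h2 : μ n * c n ≤ μ n * (ε / 2) := by
              by_cases hμn : μ n = 0
              · simp [hμn]
              · exact mul_le_mul_of_nonneg_left hcn (h0 n)
            nlinarith [h0 n, h1 n]
  have hprod := prod_tendsto_zero μ h0 h1 hsum M
  obtain ⟨M₁, hM₁⟩ := Metric.tendsto_atTop.mp hprod (ε / (2 * (a M + 1)))
    (div_pos hε (by linarith [ha M]))
  refine ⟨max M M₁, fun n hn => ?_⟩
  have h1n := hbound n (le_trans (le_max_left _ _) hn)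
  have h2n := hM₁ n (le_trans (le_max_right _ _) hn)
  rw [Real.dist_eq, sub_zero] at h2n ⊢
  have hP : (0:ℝ) ≤ ∏ k ∈ Ico M n, (1 - μ k) :=
    Finset.prod_nonneg (fun i _ => by linarith [h1 i])
  rw [abs_of_nonneg hP] at h2n
  have haM : 0 ≤ a M := ha M
  have : (∏ k ∈ Ico M n, (1 - μ k)) * a M < ε / 2 := by
    calc (∏ k ∈ Ico M n, (1 - μ k)) * a M ≤ (ε / (2 * (a M + 1))) * a M := by
          exact mul_le_mul_of_nonneg_right (le_of_lt h2n) haM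
      _ < ε / 2 := by
          rw [div_mul_eq_mul_div, div_lt_div_iff₀ (by positivity) (by norm_num)]
          nlinarith
  rw [abs_of_nonneg (ha n)]
  linarith

/-- Let `(μ_n)` be a normal sequence and let `(x_n)`, `(b_n)` be real sequences
with `x_{n+1} = (1 − μ_n) x_n + μ_n b_n` for all `n ≥ N`.  Then `∑ μ_n b_n` converges iff
`x_n → 0` and `∑ μ_n x_n` converges. -/
theorem stmt_2 (μ x b : ℕ → ℝ) (hμ : NormalSeq μ) (N : ℕ)
    (hrec : ∀ n, N ≤ n → x (n + 1) = (1 - μ n) * x n + μ n * b n) :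
    (∃ l : ℝ, Filter.Tendsto (fun m => ∑ n ∈ Finset.range m, μ n * b n) Filter.atTop (nhds l)) ↔
      (Filter.Tendsto x Filter.atTop (nhds 0) ∧
        ∃ l : ℝ, Filter.Tendsto (fun m => ∑ n ∈ Finset.range m, μ n * x n) Filter.atTop
          (nhds l)) := by
  obtain ⟨hμ0, hμIoo, hμsum, hμlim⟩ := hμ
  have h0 : ∀ n, 0 ≤ μ n := by
    intro n
    rcases Nat.eq_zero_or_pos n with h | h
    · simp [h, hμ0]
    · exact le_of_lt (hμIoo n h).1
  have h1 : ∀ n, μ n ≤ 1 := by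
    intro n
    rcases Nat.eq_zero_or_pos n with h | h
    · simp [h, hμ0]
    · exact le_of_lt (hμIoo n h).2
  set S : ℕ → ℝ := fun m => ∑ n ∈ range m, μ n * b n with hS
  set F : ℕ → ℝ := fun m => ∑ n ∈ range m, μ n * x n with hF
  -- key identity: for m ≥ N, F m + x m = (F N + x N - S N) + S m
  have key : ∀ m, N ≤ m → F m + x m = (F N + x N - S N) + S m := by
    intro m hm
    induction m, hm using Nat.le_induction with
    | base => ring
    | succ m hm ih =>
      have hFm : F (m+1) = F m + μ m * x m := by simp [hF, Finset.sum_range_succ]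
      have hSm : S (m+1) = S m + μ m * b m := by simp [hS, Finset.sum_range_succ]
      rw [hFm, hSm, hrec m hm]
      linarith
  constructor
  · rintro ⟨s, hs⟩
    -- show x → 0 via y n = x n + (s - S n)
    have hT : Tendsto (fun n => s - S n) atTop (nhds 0) := by
      have := hs.const_sub s
      simpa using this
    set y : ℕ → ℝ := fun n => x n + (s - S n) with hy
    have hyrec : ∀ n, N ≤ n → y (n+1) = (1 - μ n) * y n + μ n * (s - S n) := by
      intro n hn
      have hSm : S (n+1) = S n + μ n * b n := by simp [hS, Finset.sum_range_succ]
      simp only [hy]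
      rw [hrec n hn, hSm]
      ring
    have hay : Tendsto (fun n => |y n|) atTop (nhds 0) := by
      apply rec_tendsto_zero μ (fun n => |y n|) (fun n => |s - S n|) h0 h1 hμsum
        (fun n => abs_nonneg _) _ N
      · intro n hn
        rw [hyrec n hn]
        calc |(1 - μ n) * y n + μ n * (s - S n)| ≤
            |(1 - μ n) * y n| + |μ n * (s - S n)| := abs_add_le _ _
          _ = (1 - μ n) * |y n| + μ n * |s - S n| := by
              rw [abs_mul, abs_mul, abs_of_nonneg (by linarith [h1 n] : (0:ℝ) ≤ 1 - μ n),
                abs_of_nonneg (h0 n)]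
      · simpa using hT.abs
    have hylim : Tendsto y atTop (nhds 0) := by
      rw [← abs_zero (α := ℝ)] at hay
      exact tendsto_zero_iff_abs_tendsto_zero y |>.mpr (by simpa [Function.comp_def] using hay)
    have hxlim : Tendsto x atTop (nhds 0) := by
      have : Tendsto (fun n => y n - (s - S n)) atTop (nhds (0 - 0)) := hylim.sub hT
      simpa [hy] using this
    refine ⟨hxlim, ⟨(F N + x N - S N) + s, ?_⟩⟩
    have : Tendsto (fun m => ((F N + x N - S N) + S m) - x m) atTop
        (nhds (((F N + x N - S N) + s) - 0)) := (hs.const_add _).sub hxlim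
    rw [sub_zero] at this
    apply this.congr'
    filter_upwards [eventually_ge_atTop N] with m hm
    have := key m hm
    linarith
  · rintro ⟨hx, l, hl⟩
    have : Tendsto (fun m => (F m + x m) - (F N + x N - S N)) atTop
        (nhds ((l + 0) - (F N + x N - S N))) := (hl.add hx).sub_const _
    refine ⟨(l + 0) - (F N + x N - S N), ?_⟩
    apply this.congr'
    filter_upwards [eventually_ge_atTop N] with m hm
    have := key m hm
    simp only [hS]
    linarith
end

section
/- Let (x_n)_{n≥1} be a sequence of real numbers and (a_n)_{n≥1} a strictly increasing sequence of positive numbers tending to infinity. Then the series ∑_{n≥1} x_n / a_n converges if and only if the sequence (∑_{i=1}^n x_i)/a_n converges to zero and the series ∑_{n≥1} (1/a_n − 1/a_{n+1}) · (∑_{i=1}^n x_i) converges. -/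
open Filter Finset

/-- generalized Kronecker lemma.  Let `(x_n)_{n≥1}` be a real sequence and
`(a_n)_{n≥1}` a strictly increasing sequence of positive numbers tending to infinity.  Then
`∑_{n≥1} x_n / a_n` converges iff `(∑_{i=1}^n x_i)/a_n → 0` and
`∑_{n≥1} (1/a_n − 1/a_{n+1}) ∑_{i=1}^n x_i` converges. -/
theorem stmt_3 (x a : ℕ → ℝ)
    (ha_pos : ∀ n, 1 ≤ n → 0 < a n)
    (ha_mono : ∀ m n, 1 ≤ m → m < n → a m < a n)
    (ha_top : Filter.Tendsto a Filter.atTop Filter.atTop) :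
    (∃ l : ℝ, Filter.Tendsto (fun m => ∑ n ∈ Finset.Icc 1 m, x n / a n) Filter.atTop (nhds l)) ↔
      (Filter.Tendsto (fun n => (∑ i ∈ Finset.Icc 1 n, x i) / a n) Filter.atTop (nhds 0) ∧
        ∃ l : ℝ, Filter.Tendsto
          (fun m => ∑ n ∈ Finset.Icc 1 m, (1 / a n - 1 / a (n + 1)) * ∑ i ∈ Finset.Icc 1 n, x i)
          Filter.atTop (nhds l)) := by
  have ha_ne : ∀ n, 1 ≤ n → a n ≠ 0 := fun n hn => (ha_pos n hn).ne'
  set S : ℕ → ℝ := fun n => ∑ i ∈ Finset.Icc 1 n, x i with hSdef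
  set P : ℕ → ℝ := fun m => ∑ n ∈ Finset.Icc 1 m, x n / a n with hPdef
  set T : ℕ → ℝ := fun m => ∑ n ∈ Finset.Icc 1 m, (1 / a n - 1 / a (n + 1)) * S n with hTdef
  -- Abel identity 1
  have key : ∀ m, P m = T m + S m / a (m + 1) := by
    intro m
    induction m with
    | zero => simp [hSdef, hPdef, hTdef]
    | succ m ih =>
      have h1 : (1 : ℕ) ≤ m + 1 := Nat.succ_le_succ (Nat.zero_le m)
      have hne1 : a (m + 1) ≠ 0 := ha_ne _ h1
      have hne2 : a (m + 2) ≠ 0 := ha_ne _ (Nat.succ_le_succ (Nat.zero_le _))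
      show (∑ n ∈ Finset.Icc 1 (m + 1), x n / a n) =
        (∑ n ∈ Finset.Icc 1 (m + 1), (1 / a n - 1 / a (n + 1)) * S n) + S (m + 1) / a (m + 2)
      have hSstep : S (m + 1) = S m + x (m + 1) := by
        simp [hSdef, Finset.sum_Icc_succ_top h1]
      rw [Finset.sum_Icc_succ_top h1, Finset.sum_Icc_succ_top h1, hSstep]
      have ihP : (∑ n ∈ Finset.Icc 1 m, x n / a n) = T m + S m / a (m + 1) := ih
      rw [ihP]
      show T m + S m / a (m + 1) + x (m + 1) / a (m + 1) =
        T m + (1 / a (m + 1) - 1 / a (m + 1 + 1)) * (S m + x (m + 1)) + (S m + x (m + 1)) / a (m + 2)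
      field_simp
      ring
  -- Abel identity 2
  have key2 : ∀ m, S (m + 1) = a (m + 1) * P (m + 1) - ∑ n ∈ Finset.Icc 1 m, (a (n + 1) - a n) * P n := by
    intro m
    induction m with
    | zero =>
      have hne1 : a 1 ≠ 0 := ha_ne _ le_rfl
      simp [hSdef, hPdef, Finset.Icc_self, mul_div_cancel₀ _ hne1]
    | succ m ih =>
      have h1 : (1 : ℕ) ≤ m + 1 := Nat.succ_le_succ (Nat.zero_le m)
      have hne2 : a (m + 2) ≠ 0 := ha_ne _ (Nat.succ_le_succ (Nat.zero_le _))
      have hSstep : S (m + 2) = S (m + 1) + x (m + 2) := by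
        simp [hSdef, Finset.sum_Icc_succ_top (Nat.succ_le_succ (Nat.zero_le (m + 1)))]
      have hPstep : P (m + 2) = P (m + 1) + x (m + 2) / a (m + 2) := by
        simp [hPdef, Finset.sum_Icc_succ_top (Nat.succ_le_succ (Nat.zero_le (m + 1)))]
      rw [Finset.sum_Icc_succ_top h1, hSstep, hPstep, ih]
      field_simp
      ring
  -- shared: from S n / a n → 0 deduce S n / a (n+1) → 0
  have hshift : Tendsto (fun n => S n / a n) atTop (nhds 0) →
      Tendsto (fun n => S n / a (n + 1)) atTop (nhds 0) := by
    intro h0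
    apply squeeze_zero_norm' (a := fun n => |S n / a n|)
    · filter_upwards [eventually_ge_atTop 1] with n hn
      have hpos : 0 < a n := ha_pos n hn
      have hpos' : 0 < a (n + 1) := ha_pos _ (Nat.le_succ_of_le hn)
      have hle : a n ≤ a (n + 1) := (ha_mono n (n + 1) hn (Nat.lt_succ_self n)).le
      rw [Real.norm_eq_abs, abs_div, abs_div, abs_of_pos hpos, abs_of_pos hpos']
      gcongr
    · simpa using h0.abs
  constructor
  · rintro ⟨l, hP⟩
    -- Kronecker direction
    have hsucc : Tendsto (fun m : ℕ => m + 1) atTop atTop := tendsto_add_atTop_nat 1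
    -- the weighted sum
    have hgsum : ∀ m, ∑ i ∈ Finset.range m, (a (i + 1 + 1) - a (i + 1)) = a (m + 1) - a 1 := by
      intro m
      exact Finset.sum_range_sub (fun i => a (i + 1)) m
    have hg_nonneg : (0 : ℕ → ℝ) ≤ fun i => a (i + 1 + 1) - a (i + 1) := by
      intro i
      have := ha_mono (i + 1) (i + 2) (Nat.succ_le_succ (Nat.zero_le _)) (Nat.lt_succ_self _)
      simpa using this.le
    have hgtop : Tendsto (fun m => ∑ i ∈ Finset.range m, (a (i + 1 + 1) - a (i + 1))) atTop atTop := by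
      simp only [hgsum]
      exact tendsto_atTop_add_const_right _ _ (ha_top.comp hsucc)
    have hu0 : Tendsto (fun i => P (i + 1) - l) atTop (nhds 0) := by
      simpa using (hP.comp hsucc).sub_const l
    have ho : (fun i => (a (i + 1 + 1) - a (i + 1)) * (P (i + 1) - l)) =o[atTop]
        (fun i => a (i + 1 + 1) - a (i + 1)) := by
      have h := (Asymptotics.isBigO_refl (fun i => a (i + 1 + 1) - a (i + 1)) atTop).mul_isLittleO
        ((Asymptotics.isLittleO_one_iff ℝ).2 hu0)
      simpa using h
    have hsum_o := ho.sum_range hg_nonneg hgtop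
    have hratio : Tendsto (fun m => (a (m + 1) - a 1) / a (m + 1)) atTop (nhds 1) := by
        have hinv : Tendsto (fun m => a 1 / a (m + 1)) atTop (nhds 0) :=
          tendsto_const_nhds.div_atTop (ha_top.comp hsucc)
        have heq : ∀ m : ℕ, (a (m + 1) - a 1) / a (m + 1) = 1 - a 1 / a (m + 1) := by
          intro m
          have hne : a (m + 1) ≠ 0 := ha_ne _ (Nat.succ_le_succ (Nat.zero_le m))
          field_simp
        have h2 : Tendsto (fun m => 1 - a 1 / a (m + 1)) atTop (nhds (1 - 0)) :=
          tendsto_const_nhds.sub hinv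
        rw [sub_zero] at h2
        exact h2.congr fun m => (heq m).symm
    have hnum0 : Tendsto (fun m => (∑ i ∈ Finset.range m,
        (a (i + 1 + 1) - a (i + 1)) * (P (i + 1) - l)) / a (m + 1)) atTop (nhds 0) := by
      have h1 := hsum_o.tendsto_div_nhds_zero
      simp only [hgsum] at h1
      have := h1.mul hratio
      rw [mul_one] at this
      refine this.congr' ?_
      filter_upwards [eventually_ge_atTop 1] with m hm
      have hne : a (m + 1) - a 1 ≠ 0 :=
        sub_ne_zero.2 (ha_mono 1 (m + 1) le_rfl (Nat.lt_succ_of_le hm)).ne'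
      field_simp
    -- numerator identity
    have hnum : ∀ m, (∑ n ∈ Finset.Icc 1 m, (a (n + 1) - a n) * P n)
        = (∑ i ∈ Finset.range m, (a (i + 1 + 1) - a (i + 1)) * (P (i + 1) - l))
          + l * (a (m + 1) - a 1) := by
      intro m
      rw [show Finset.Icc 1 m = Finset.Ico 1 (m + 1) from (Finset.Ico_add_one_right_eq_Icc 1 m).symm,
        Finset.sum_Ico_eq_sum_range]
      simp only [Nat.add_sub_cancel]
      rw [← hgsum m, Finset.mul_sum, ← Finset.sum_add_distrib]
      refine Finset.sum_congr rfl fun i _ => ?_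
      rw [Nat.add_comm 1 i]
      ring
    have hQ : Tendsto (fun m => (∑ n ∈ Finset.Icc 1 m, (a (n + 1) - a n) * P n) / a (m + 1))
        atTop (nhds l) := by
      have hterm2 : Tendsto (fun m => l * ((a (m + 1) - a 1) / a (m + 1))) atTop (nhds (l * 1)) :=
        tendsto_const_nhds.mul hratio
      have h3 := hnum0.add hterm2
      rw [zero_add, mul_one] at h3
      exact h3.congr fun m => by rw [hnum m, add_div, mul_div_assoc]
    have h0 : Tendsto (fun n => S n / a n) atTop (nhds 0) := by
      apply (Filter.tendsto_add_atTop_iff_nat 1).1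
      have hid : ∀ m : ℕ, S (m + 1) / a (m + 1)
          = P (m + 1) - (∑ n ∈ Finset.Icc 1 m, (a (n + 1) - a n) * P n) / a (m + 1) := by
        intro m
        have hne : a (m + 1) ≠ 0 := ha_ne _ (Nat.succ_le_succ (Nat.zero_le m))
        rw [key2 m, sub_div, mul_comm, mul_div_assoc, div_self hne, mul_one]
      have h4 := (hP.comp hsucc).sub hQ
      rw [sub_self] at h4
      exact h4.congr fun m => (hid m).symm
    refine ⟨h0, l, ?_⟩
    have h5 := hP.sub (hshift h0)
    rw [sub_zero] at h5
    exact h5.congr fun m => by rw [key m]; ring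
  · rintro ⟨h0, l, hT⟩
    refine ⟨l, ?_⟩
    have h1 := hT.add (hshift h0)
    rw [add_zero] at h1
    exact h1.congr fun m => (key m).symm
end

section
/- Let T = (t_{nk})_{n,k≥0} be an infinite matrix with nonnegative entries such that for every n the row sum ∑_{k≥0} t_{nk} is finite. For a convergent real sequence (q_k) define its transform Q_n = ∑_{k≥0} t_{nk} q_k (which is well defined since convergent sequences are bounded). The summation method is regular — i.e., for every convergent sequence (q_k) with limit q one has Q_n → q as n → ∞ — if and only if (1) lim_{n→∞} ∑_{k≥0} t_{nk} = 1 and (2) for every fixed k, lim_{n→∞} t_{nk} = 0. -/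
open Filter Finset

set_option maxHeartbeats 1000000 in
/-- Toeplitz.  Let `T = (t_{nk})` be an infinite matrix with nonnegative
entries and finite row sums.  The associated matrix summation method `Q_n = ∑_k t_{nk} q_k`
is regular (maps every convergent sequence to a sequence with the same limit) iff
`∑_k t_{nk} → 1` as `n → ∞` and, for every fixed `k`, `t_{nk} → 0` as `n → ∞`. -/
theorem stmt_4 (t : ℕ → ℕ → ℝ) (hnn : ∀ n k, 0 ≤ t n k) (hrow : ∀ n, Summable (t n)) :
    (∀ (q : ℕ → ℝ) (L : ℝ), Filter.Tendsto q Filter.atTop (nhds L) →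
        Filter.Tendsto (fun n => ∑' k, t n k * q k) Filter.atTop (nhds L)) ↔
      (Filter.Tendsto (fun n => ∑' k, t n k) Filter.atTop (nhds 1) ∧
        ∀ k, Filter.Tendsto (fun n => t n k) Filter.atTop (nhds 0)) := by
  constructor
  · intro h
    refine ⟨?_, ?_⟩
    · simpa using h (fun _ => 1) 1 tendsto_const_nhds
    · intro k
      have hq : Tendsto (fun j => if j = k then (1:ℝ) else 0) atTop (nhds 0) := by
        apply Tendsto.congr' _ (tendsto_const_nhds (x := (0:ℝ)))
        filter_upwards [eventually_gt_atTop k] with j hj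
        simp [hj.ne']
      have h0 := h (fun j => if j = k then (1:ℝ) else 0) 0 hq
      have heq : ∀ n, (∑' j, t n j * (if j = k then (1:ℝ) else 0)) = t n k := by
        intro n
        rw [tsum_eq_single k (fun b hb => by simp [hb])]
        simp
      exact (tendsto_congr heq).mp h0
  · rintro ⟨h1, h2⟩ q L hq
    have hq0 : Tendsto (fun k => q k - L) atTop (nhds 0) := by
      simpa using hq.sub (tendsto_const_nhds (x := L))
    obtain ⟨M, hM⟩ : ∃ M : ℝ, ∀ k, |q k - L| ≤ M := by
      have hb : BddAbove (Set.range fun k => |q k - L|) := by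
        have : Tendsto (fun k => |q k - L|) atTop (nhds 0) := by
          simpa using hq0.abs
        exact this.bddAbove_range
      obtain ⟨M, hMem⟩ := hb
      exact ⟨M, fun k => hMem (Set.mem_range_self k)⟩
    have habs : ∀ n, Summable (fun k => t n k * |q k - L|) := fun n =>
      Summable.of_nonneg_of_le (fun k => mul_nonneg (hnn n k) (abs_nonneg _))
        (fun k => mul_le_mul_of_nonneg_left (hM k) (hnn n k)) ((hrow n).mul_right M)
    have hsum : ∀ n, Summable (fun k => t n k * (q k - L)) := fun n => by
      apply Summable.of_abs
      exact (habs n).congr fun k => by rw [abs_mul, abs_of_nonneg (hnn n k)]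
    have hmain : Tendsto (fun n => ∑' k, t n k * (q k - L)) atTop (nhds 0) := by
      rw [Metric.tendsto_atTop]
      intro ε hε
      obtain ⟨K, hK⟩ := Metric.tendsto_atTop.mp hq0 (ε/4) (by positivity)
      have hfin : Tendsto (fun n => ∑ k ∈ Finset.range K, t n k * |q k - L|)
          atTop (nhds 0) := by
        have := tendsto_finset_sum (Finset.range K)
          (fun k _ => (h2 k).mul_const (|q k - L|))
        simpa using this
      obtain ⟨N1, hN1⟩ := Metric.tendsto_atTop.mp hfin (ε/2) (by positivity)
      obtain ⟨N2, hN2⟩ := Metric.tendsto_atTop.mp h1 1 one_pos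
      refine ⟨max N1 N2, fun n hn => ?_⟩
      have hrowlt : ∑' k, t n k < 2 := by
        have h' := hN2 n (le_trans (le_max_right _ _) hn)
        rw [Real.dist_eq] at h'
        have := abs_lt.mp h'
        linarith [this.2]
      have hfinlt : ∑ k ∈ Finset.range K, t n k * |q k - L| < ε/2 := by
        have h' := hN1 n (le_trans (le_max_left _ _) hn)
        rwa [Real.dist_0_eq_abs,
          abs_of_nonneg (Finset.sum_nonneg fun k _ =>
            mul_nonneg (hnn n k) (abs_nonneg _))] at h'
      have h2' : ∑' j, t n (j + K) ≤ ∑' k, t n k := by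
        have heq := Summable.sum_add_tsum_nat_add (f := t n) K (hrow n)
        have hs : 0 ≤ ∑ k ∈ Finset.range K, t n k :=
          Finset.sum_nonneg fun k _ => hnn n k
        linarith
      have htail : ∑' j, t n (j + K) * |q (j + K) - L| ≤ (∑' k, t n k) * (ε/4) := by
        calc ∑' j, t n (j + K) * |q (j + K) - L|
            ≤ ∑' j, t n (j + K) * (ε/4) := by
              have hs1 : Summable (fun j => t n (j + K) * |q (j + K) - L|) :=
                (summable_nat_add_iff (f := fun k => t n k * |q k - L|) K).mpr (habs n)
              have hs2 : Summable (fun j => t n (j + K) * (ε/4)) :=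
                ((summable_nat_add_iff (f := t n) K).mpr (hrow n)).mul_right (ε/4)
              apply Summable.tsum_le_tsum _ hs1 hs2
              intro j
              refine mul_le_mul_of_nonneg_left (le_of_lt ?_) (hnn n _)
              have := hK (j + K) (Nat.le_add_left K j)
              rwa [Real.dist_0_eq_abs] at this
          _ = (∑' j, t n (j + K)) * (ε/4) := by rw [tsum_mul_right]
          _ ≤ (∑' k, t n k) * (ε/4) :=
              mul_le_mul_of_nonneg_right h2' (by positivity)
      have hrowb : (∑' k, t n k) * (ε/4) < 2 * (ε/4) :=
        mul_lt_mul_of_pos_right hrowlt (by positivity)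
      rw [Real.dist_0_eq_abs]
      calc |∑' k, t n k * (q k - L)|
          ≤ ∑' k, t n k * |q k - L| := by
            have hsn : Summable fun k => ‖t n k * (q k - L)‖ :=
              (habs n).congr fun k => by
                rw [Real.norm_eq_abs, abs_mul, abs_of_nonneg (hnn n k)]
            have hle := norm_tsum_le_tsum_norm hsn
            simp only [Real.norm_eq_abs] at hle
            refine hle.trans_eq ?_
            congr 1; funext k; rw [abs_mul, abs_of_nonneg (hnn n k)]
        _ = (∑ k ∈ Finset.range K, t n k * |q k - L|)
              + ∑' j, t n (j + K) * |q (j + K) - L| :=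
            (Summable.sum_add_tsum_nat_add (f := fun k => t n k * |q k - L|) K (habs n)).symm
        _ < ε := by linarith
    have hfull : (fun n => ∑' k, t n k * q k)
        = fun n => (∑' k, t n k * (q k - L)) + L * ∑' k, t n k := by
      funext n
      have hpt : ∀ k, t n k * q k = t n k * (q k - L) + t n k * L := fun k => by ring
      simp_rw [hpt]
      rw [Summable.tsum_add (hsum n) ((hrow n).mul_right L), tsum_mul_right]
      ring
    rw [hfull]
    have := hmain.add (h1.const_mul L)
    simpa using this
end

section
/- Let (X_n)_{n≥1} be a sequence of random variables adapted to a filtration (G_n)_{n≥1} (i.e. X_n is G_n-measurable), and let C > 0 be a constant. Then for almost every ω belonging to the event on which simultaneously (a) ∑_{i≥2} P(|X_i| > C | G_{i−1}) < ∞, (b) the series ∑_{i≥2} E(X_i · 1_{|X_i| ≤ C} | G_{i−1}) converges, and (c) ∑_{i≥2} [ E(X_i² · 1_{|X_i| ≤ C} | G_{i−1}) − (E(X_i · 1_{|X_i| ≤ C} | G_{i−1}))² ] < ∞, the series ∑_{i≥1} X_i(ω) converges. -/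
open Filter Finset MeasureTheory
open scoped MeasureTheory ENNReal
open scoped NNReal Topology

section ThreeSeriesAux
variable {Ω : Type*} {m0 : MeasurableSpace Ω} (μ : Measure Ω) [IsProbabilityMeasure μ]

variable {Ω : Type*} {m0 : MeasurableSpace Ω} (μ : Measure Ω) [IsProbabilityMeasure μ]

lemma my_integrable_of_bdd {f : Ω → ℝ} {c : ℝ} (hf : AEStronglyMeasurable f μ)
    (h : ∀ ω, |f ω| ≤ c) : Integrable f μ :=
  ⟨hf, HasFiniteIntegral.of_bounded (C := c)
    (Eventually.of_forall (by simpa [Real.norm_eq_abs] using h))⟩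

theorem core_key (ℱ : Filtration ℕ m0) (Z : ℕ → Ω → ℝ) (R : ℝ) (hR : 0 ≤ R)
    (hZm : ∀ k, StronglyMeasurable[ℱ (k+1)] (Z k))
    (hZb : ∀ k ω, |Z k ω| ≤ R)
    (hZ0 : ∀ k, μ[Z k | ℱ k] =ᵐ[μ] 0)
    (v : ℕ → Ω → ℝ)
    (hvm : ∀ k, StronglyMeasurable[ℱ k] (v k))
    (hv0 : ∀ k ω, 0 ≤ v k ω)
    (hvint : ∀ k, Integrable (v k) μ)
    (hvv : ∀ k, μ[fun ω => (Z k ω)^2 | ℱ k] ≤ᵐ[μ] v k) (K : ℕ) :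
    ∀ᵐ ω ∂μ, ∃ l, Tendsto
      (fun n => ∑ k ∈ Finset.range n,
        (if (∑ j ∈ Finset.range (k+1), v j ω) ≤ (K:ℝ) then (1:ℝ) else 0) * Z k ω)
      atTop (𝓝 l) := by
  set χ : ℕ → Ω → ℝ :=
    fun k ω => if (∑ j ∈ Finset.range (k+1), v j ω) ≤ (K:ℝ) then (1:ℝ) else 0 with hχdef
  set W : ℕ → Ω → ℝ := fun k ω => χ k ω * Z k ω with hWdef
  set S : ℕ → Ω → ℝ := fun n ω => ∑ k ∈ Finset.range n, W k ω with hSdef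
  have hχm : ∀ k, StronglyMeasurable[ℱ k] (χ k) := by
    intro k
    refine Measurable.stronglyMeasurable ?_
    refine Measurable.ite ?_ measurable_const measurable_const
    exact measurableSet_le (Finset.measurable_sum _ fun j hj =>
      ((hvm j).mono (ℱ.mono (Nat.lt_succ_iff.mp (Finset.mem_range.mp hj)))).measurable)
      measurable_const
  have hχ0 : ∀ k ω, 0 ≤ χ k ω := by intro k ω; by_cases h : (∑ j ∈ Finset.range (k+1), v j ω) ≤ (K:ℝ) <;> simp [hχdef, h]
  have hχ1 : ∀ k ω, χ k ω ≤ 1 := by intro k ω; by_cases h : (∑ j ∈ Finset.range (k+1), v j ω) ≤ (K:ℝ) <;> simp [hχdef, h]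
  have hχabs : ∀ k ω, |χ k ω| ≤ 1 := fun k ω => abs_le.2 ⟨by linarith [hχ0 k ω], hχ1 k ω⟩
  have hZint : ∀ k, Integrable (Z k) μ := fun k =>
    my_integrable_of_bdd μ ((hZm k).mono (ℱ.le _)).aestronglyMeasurable (hZb k)
  have hWm : ∀ k, StronglyMeasurable[ℱ (k+1)] (W k) :=
    fun k => ((hχm k).mono (ℱ.mono k.le_succ)).mul (hZm k)
  have hWb : ∀ k ω, |W k ω| ≤ R := by
    intro k ω
    rw [hWdef, abs_mul]
    calc |χ k ω| * |Z k ω| ≤ 1 * R :=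
      mul_le_mul (hχabs k ω) (hZb k ω) (abs_nonneg _) zero_le_one
    _ = R := one_mul R
  have hWint : ∀ k, Integrable (W k) μ := fun k =>
    my_integrable_of_bdd μ ((hWm k).mono (ℱ.le _)).aestronglyMeasurable (hWb k)
  have hSm : ∀ n, StronglyMeasurable[ℱ n] (S n) := by
    intro n
    refine Measurable.stronglyMeasurable ?_
    exact Finset.measurable_sum _ fun k hk =>
      ((hWm k).mono (ℱ.mono (Finset.mem_range.mp hk))).measurable
  have hSb : ∀ n ω, |S n ω| ≤ n * R := by
    intro n ω
    calc |S n ω| ≤ ∑ k ∈ Finset.range n, |W k ω| := Finset.abs_sum_le_sum_abs _ _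
    _ ≤ ∑ _k ∈ Finset.range n, R := Finset.sum_le_sum fun k _ => hWb k ω
    _ = n * R := by simp [mul_comm]
  have hSint : ∀ n, Integrable (S n) μ := fun n =>
    my_integrable_of_bdd μ ((hSm n).mono (ℱ.le _)).aestronglyMeasurable (hSb n)
  have hsucc : ∀ n, S (n+1) = S n + W n := fun n => funext fun ω => Finset.sum_range_succ _ n
  -- martingale property
  have hmart : Martingale S ℱ μ := by
    refine martingale_nat (fun n => hSm n) hSint (fun n => ?_)
    have h1 : μ[S (n+1)|ℱ n] =ᵐ[μ] μ[S n|ℱ n] + μ[W n|ℱ n] := by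
      rw [hsucc n]; exact condExp_add (hSint n) (hWint n) (ℱ n)
    have h2 : μ[S n|ℱ n] = S n := condExp_of_stronglyMeasurable (ℱ.le n) (hSm n) (hSint n)
    have h3 : μ[W n|ℱ n] =ᵐ[μ] χ n * μ[Z n|ℱ n] :=
      condExp_mul_of_stronglyMeasurable_left (hχm n) (hWint n) (hZint n)
    have h4 : χ n * μ[Z n|ℱ n] =ᵐ[μ] 0 := by
      filter_upwards [hZ0 n] with ω hω
      simp [Pi.mul_apply, hω]
    refine EventuallyEq.symm (h1.trans ?_)
    calc μ[S n|ℱ n] + μ[W n|ℱ n] =ᵐ[μ] S n + (0:Ω → ℝ) := by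
          rw [h2]; exact EventuallyEq.add (EventuallyEq.refl _ _) (h3.trans h4)
      _ = S n := by simp
  have hS2int : ∀ n, Integrable (fun ω => (S n ω)^2) μ := by
    intro n
    refine my_integrable_of_bdd μ
      ((((hSm n).mono (ℱ.le _)).measurable.pow_const 2).stronglyMeasurable).aestronglyMeasurable
      (c := ((n:ℝ)*R)^2) fun ω => ?_
    rw [abs_pow]
    exact pow_le_pow_left₀ (abs_nonneg _) (hSb n ω) 2
  have hS2 : ∀ n, ∫ ω, (S n ω)^2 ∂μ ≤ ∑ k ∈ Finset.range n, ∫ ω, χ k ω * v k ω ∂μ := by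
    intro n
    induction n with
    | zero => simp [hSdef]
    | succ n ih =>
      have hSsm : AEStronglyMeasurable (fun ω => (S n ω)^2) μ :=
        ((((hSm n).mono (ℱ.le _)).measurable.pow_const 2).stronglyMeasurable).aestronglyMeasurable
      have hS2int : Integrable (fun ω => (S n ω)^2) μ := by
        refine my_integrable_of_bdd μ hSsm (c := (n*R)^2) fun ω => ?_
        rw [abs_pow]
        exact pow_le_pow_left₀ (abs_nonneg _) (hSb n ω) 2
      have hcrossint : Integrable (fun ω => S n ω * W n ω) μ := by
        refine my_integrable_of_bdd μ (c := (n*R)*R) ?_ fun ω => ?_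
        · exact (((hSm n).mono (ℱ.le _)).mul ((hWm n).mono (ℱ.le _))).aestronglyMeasurable
        · rw [abs_mul]
          exact mul_le_mul (hSb n ω) (hWb n ω) (abs_nonneg _) (by positivity)
      have hW2int : Integrable (fun ω => (W n ω)^2) μ := by
        refine my_integrable_of_bdd μ (c := R^2) ?_ fun ω => ?_
        · exact (((hWm n).mono (ℱ.le _)).measurable.pow_const 2).stronglyMeasurable.aestronglyMeasurable
        · rw [abs_pow]; exact pow_le_pow_left₀ (abs_nonneg _) (hWb n ω) 2
      -- cross term is zero
      have hcross : ∫ ω, S n ω * W n ω ∂μ = 0 := by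
        set U : Ω → ℝ := fun ω => S n ω * χ n ω with hUdef
        have hUm : StronglyMeasurable[ℱ n] U := (hSm n).mul (hχm n)
        have hUb : ∀ ω, |U ω| ≤ n * R := by
          intro ω
          rw [hUdef, abs_mul]
          calc |S n ω| * |χ n ω| ≤ (n*R) * 1 :=
            mul_le_mul (hSb n ω) (hχabs n ω) (abs_nonneg _) (by positivity)
          _ = n*R := mul_one _
        have hUZint : Integrable (U * Z n) μ := by
          refine my_integrable_of_bdd μ (c := (n*R)*R) ?_ fun ω => ?_
          · exact ((hUm.mono (ℱ.le _)).mul ((hZm n).mono (ℱ.le _))).aestronglyMeasurable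
          · rw [Pi.mul_apply, abs_mul]
            exact mul_le_mul (hUb ω) (hZb n ω) (abs_nonneg _) (by positivity)
        have he : (fun ω => S n ω * W n ω) = U * Z n := by
          funext ω; rw [Pi.mul_apply, hUdef, hWdef]; ring
        rw [he, ← integral_condExp (ℱ.le n) (f := U * Z n)]
        have e2 : μ[U * Z n|ℱ n] =ᵐ[μ] (0 : Ω → ℝ) := by
          refine (condExp_mul_of_stronglyMeasurable_left hUm hUZint (hZint n)).trans ?_
          filter_upwards [hZ0 n] with ω hω
          simp [Pi.mul_apply, hω]
        rw [integral_congr_ae e2]; simp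
      -- square term
      have hsq : ∫ ω, (W n ω)^2 ∂μ ≤ ∫ ω, χ n ω * v n ω ∂μ := by
        have hg2int : Integrable (fun ω => (Z n ω)^2) μ := by
          refine my_integrable_of_bdd μ (c := R^2) ?_ fun ω => ?_
          · exact (((hZm n).mono (ℱ.le _)).measurable.pow_const 2).stronglyMeasurable.aestronglyMeasurable
          · rw [abs_pow]; exact pow_le_pow_left₀ (abs_nonneg _) (hZb n ω) 2
        have hχg2int : Integrable (χ n * fun ω => (Z n ω)^2) μ := by
          refine my_integrable_of_bdd μ (c := 1*R^2) ?_ fun ω => ?_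
          · exact (((hχm n).mono (ℱ.le _)).mul
              (((hZm n).mono (ℱ.le _)).measurable.pow_const 2).stronglyMeasurable).aestronglyMeasurable
          · rw [Pi.mul_apply, abs_mul]
            refine mul_le_mul (hχabs n ω) ?_ (abs_nonneg _) zero_le_one
            rw [abs_pow]; exact pow_le_pow_left₀ (abs_nonneg _) (hZb n ω) 2
        have he : (fun ω => (W n ω)^2) = χ n * fun ω => (Z n ω)^2 := by
          funext ω
          rw [Pi.mul_apply, hWdef, hχdef]
          by_cases h : (∑ j ∈ Finset.range (n+1), v j ω) ≤ (K:ℝ) <;> simp [h]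
        rw [he, ← integral_condExp (ℱ.le n) (f := χ n * fun ω => (Z n ω)^2)]
        have e2 : μ[χ n * fun ω => (Z n ω)^2|ℱ n]
            =ᵐ[μ] χ n * μ[fun ω => (Z n ω)^2|ℱ n] :=
          condExp_mul_of_stronglyMeasurable_left (hχm n) hχg2int hg2int
        rw [integral_congr_ae e2]
        refine integral_mono_ae ?_ ?_ ?_
        · exact Integrable.bdd_mul (c := 1) integrable_condExp
            ((hχm n).mono (ℱ.le _)).aestronglyMeasurable
            (Eventually.of_forall fun ω => by simpa [Real.norm_eq_abs] using hχabs n ω)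
        · exact Integrable.bdd_mul (c := 1) (hvint n)
            ((hχm n).mono (ℱ.le _)).aestronglyMeasurable
            (Eventually.of_forall fun ω => by simpa [Real.norm_eq_abs] using hχabs n ω)
        · filter_upwards [hvv n] with ω hω
          exact mul_le_mul_of_nonneg_left hω (hχ0 n ω)
      -- put it together
      have hexp : ∫ ω, (S (n+1) ω)^2 ∂μ
          = ∫ ω, (S n ω)^2 ∂μ + (2 * ∫ ω, S n ω * W n ω ∂μ + ∫ ω, (W n ω)^2 ∂μ) := by
        have : (fun ω => (S (n+1) ω)^2)
            = fun ω => (S n ω)^2 + (2*(S n ω * W n ω) + (W n ω)^2) := by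
          funext ω; rw [hsucc n, Pi.add_apply]; ring
        have h2c : Integrable (fun ω => 2*(S n ω * W n ω)) μ := hcrossint.const_mul 2
        have h23 : Integrable (fun ω => 2*(S n ω * W n ω) + (W n ω)^2) μ := h2c.add hW2int
        rw [this, integral_add hS2int h23, integral_add h2c hW2int, MeasureTheory.integral_const_mul]
      rw [hexp, Finset.sum_range_succ, hcross]
      linarith
  -- pointwise bound for the truncated variance sums
  have hpt : ∀ ω n, ∑ k ∈ Finset.range n, χ k ω * v k ω ≤ (K:ℝ) := by
    intro ω n
    have hle : ∀ m, ∑ k ∈ Finset.range m, χ k ω * v k ω ≤ ∑ k ∈ Finset.range m, v k ω :=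
      fun m => Finset.sum_le_sum fun k _ =>
        mul_le_of_le_one_left (hv0 k ω) (hχ1 k ω)
    induction n with
    | zero => simp
    | succ n ih =>
      rw [Finset.sum_range_succ]
      by_cases h : (∑ j ∈ Finset.range (n+1), v j ω) ≤ (K:ℝ)
      · have hχn : χ n ω = 1 := by rw [hχdef]; simp [h]
        rw [hχn, one_mul]
        calc ∑ k ∈ Finset.range n, χ k ω * v k ω + v n ω
            ≤ ∑ k ∈ Finset.range n, v k ω + v n ω := by linarith [hle n]
          _ = ∑ k ∈ Finset.range (n+1), v k ω := (Finset.sum_range_succ _ n).symm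
          _ ≤ (K:ℝ) := h
      · have hχn : χ n ω = 0 := by rw [hχdef]; simp [h]
        rw [hχn, zero_mul, add_zero]; exact ih
  -- second moment bounded by K
  have hS2K : ∀ n, ∫ ω, (S n ω)^2 ∂μ ≤ (K:ℝ) := by
    intro n
    refine (hS2 n).trans ?_
    have hint : ∀ k, Integrable (fun ω => χ k ω * v k ω) μ := fun k =>
      Integrable.bdd_mul (c := 1) (hvint k) ((hχm k).mono (ℱ.le _)).aestronglyMeasurable
        (Eventually.of_forall fun ω => by simpa [Real.norm_eq_abs] using hχabs k ω)
    calc ∑ k ∈ Finset.range n, ∫ ω, χ k ω * v k ω ∂μ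
        = ∫ ω, ∑ k ∈ Finset.range n, χ k ω * v k ω ∂μ :=
          (integral_finset_sum _ fun k _ => hint k).symm
      _ ≤ ∫ (_ : Ω), (K:ℝ) ∂μ := integral_mono (integrable_finset_sum _ fun k _ => hint k)
          (integrable_const _) (fun ω => hpt ω n)
      _ = (K:ℝ) := by simp
  -- L¹ bound
  have hL1 : ∀ n, eLpNorm (S n) 1 μ ≤ ((K:ℝ≥0) + 1 : ℝ≥0) := by
    intro n
    rw [eLpNorm_one_eq_lintegral_enorm, ← ofReal_integral_norm_eq_lintegral_enorm (hSint n)]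
    have h1 : ∫ ω, ‖S n ω‖ ∂μ ≤ (K:ℝ) + 1 := by
      have hptw : ∀ ω, ‖S n ω‖ ≤ ((S n ω)^2 + 1)/2 := by
        intro ω
        rw [Real.norm_eq_abs]
        nlinarith [sq_nonneg (|S n ω| - 1), sq_abs (S n ω)]
      calc ∫ ω, ‖S n ω‖ ∂μ ≤ ∫ ω, ((S n ω)^2 + 1)/2 ∂μ :=
            integral_mono (hSint n).norm (((hS2int n).add (integrable_const 1)).div_const 2) hptw
        _ = ((∫ ω, (S n ω)^2 ∂μ) + 1)/2 := by
            rw [integral_div, integral_add (hS2int n) (integrable_const 1)]; simp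
        _ ≤ ((K:ℝ) + 1)/2 := by linarith [hS2K n]
        _ ≤ (K:ℝ) + 1 := by have : (0:ℝ) ≤ (K:ℝ) := Nat.cast_nonneg K; linarith
    calc ENNReal.ofReal (∫ ω, ‖S n ω‖ ∂μ) ≤ ENNReal.ofReal ((K:ℝ) + 1) :=
          ENNReal.ofReal_le_ofReal h1
      _ = ((K:ℝ≥0) + 1 : ℝ≥0) := by
          rw [ENNReal.ofReal_add (by positivity) zero_le_one]
          simp
  filter_upwards [hmart.submartingale.ae_tendsto_limitProcess hL1] with ω hω
  exact ⟨_, hω⟩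

theorem core_mart (ℱ : Filtration ℕ m0) (Z : ℕ → Ω → ℝ) (R : ℝ) (hR : 0 ≤ R)
    (hZm : ∀ k, StronglyMeasurable[ℱ (k+1)] (Z k))
    (hZb : ∀ k ω, |Z k ω| ≤ R)
    (hZ0 : ∀ k, μ[Z k | ℱ k] =ᵐ[μ] 0)
    (v : ℕ → Ω → ℝ)
    (hvm : ∀ k, StronglyMeasurable[ℱ k] (v k))
    (hv0 : ∀ k ω, 0 ≤ v k ω)
    (hvint : ∀ k, Integrable (v k) μ)
    (hvv : ∀ k, μ[fun ω => (Z k ω)^2 | ℱ k] ≤ᵐ[μ] v k) :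
    ∀ᵐ ω ∂μ, (∑' k, ENNReal.ofReal (v k ω)) < ⊤ →
      ∃ l, Tendsto (fun n => ∑ k ∈ Finset.range n, Z k ω) atTop (𝓝 l) := by
  have key : ∀ K : ℕ, ∀ᵐ ω ∂μ, ∃ l, Tendsto
      (fun n => ∑ k ∈ Finset.range n,
        (if (∑ j ∈ Finset.range (k+1), v j ω) ≤ (K:ℝ) then (1:ℝ) else 0) * Z k ω)
      atTop (𝓝 l) :=
    fun K => core_key μ ℱ Z R hR hZm hZb hZ0 v hvm hv0 hvint hvv K
  filter_upwards [ae_all_iff.2 key] with ω hω hfin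
  set t : ℝ := (∑' k, ENNReal.ofReal (v k ω)).toReal with ht
  obtain ⟨K, hK⟩ : ∃ K : ℕ, t ≤ (K:ℝ) := ⟨⌈t⌉₊, Nat.le_ceil t⟩
  have hpart : ∀ m : ℕ, ∑ j ∈ Finset.range m, v j ω ≤ (K:ℝ) := by
    intro m
    have h1 : ENNReal.ofReal (∑ j ∈ Finset.range m, v j ω)
        = ∑ j ∈ Finset.range m, ENNReal.ofReal (v j ω) :=
      ENNReal.ofReal_sum_of_nonneg fun j _ => hv0 j ω
    have h2 : (∑ j ∈ Finset.range m, ENNReal.ofReal (v j ω)) ≤ ∑' k, ENNReal.ofReal (v k ω) :=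
      ENNReal.sum_le_tsum _
    have h3 : ∑ j ∈ Finset.range m, v j ω ≤ t := by
      rw [ht, ← ENNReal.toReal_ofReal (Finset.sum_nonneg fun j _ => hv0 j ω), h1]
      exact ENNReal.toReal_mono hfin.ne h2
    linarith
  obtain ⟨l, hl⟩ := hω K
  refine ⟨l, hl.congr fun n => Finset.sum_congr rfl fun k _ => ?_⟩
  rw [if_pos (hpart (k+1)), one_mul]

lemma condexp_sq_bound {m : MeasurableSpace Ω} (hm : m ≤ m0)
    (Y : Ω → ℝ) (hYsm : AEStronglyMeasurable[m0] Y μ) (C : ℝ) (hC : 0 < C)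
    (hYb : ∀ ω, |Y ω| ≤ C)
    (g' : Ω → ℝ) (hg'm : StronglyMeasurable[m] g') (hg'b : ∀ ω, |g' ω| ≤ C)
    (hg'g : g' =ᵐ[μ] μ[Y|m]) :
    μ[fun ω => (Y ω - g' ω)^2|m]
      ≤ᵐ[μ] fun ω => max ((μ[fun ω' => (Y ω')^2|m]) ω - ((μ[Y|m]) ω)^2) 0 := by
  have hYint : Integrable Y μ := my_integrable_of_bdd μ hYsm hYb
  have hY2int : Integrable (fun ω => (Y ω)^2) μ := by
    refine my_integrable_of_bdd μ (c := C^2) ?_ fun ω => ?_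
    · exact (hYsm.aemeasurable.pow_const 2).aestronglyMeasurable
    · rw [abs_pow]; exact pow_le_pow_left₀ (abs_nonneg _) (hYb ω) 2
  have hg'int : Integrable g' μ :=
    my_integrable_of_bdd μ ((hg'm.mono hm).aestronglyMeasurable) (hg'b)
  have hg'2int : Integrable (fun ω => g' ω * g' ω) μ := by
    refine my_integrable_of_bdd μ (c := C*C) ?_ fun ω => ?_
    · exact ((hg'm.mono hm).mul (hg'm.mono hm)).aestronglyMeasurable
    · rw [abs_mul]
      exact mul_le_mul (hg'b ω) (hg'b ω) (abs_nonneg _) hC.le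
  have hg'Yint : Integrable (fun ω => g' ω * Y ω) μ := by
    refine my_integrable_of_bdd μ (c := C*C) ?_ fun ω => ?_
    · exact ((hg'm.mono hm).aestronglyMeasurable.aemeasurable.mul
        hYsm.aemeasurable).aestronglyMeasurable
    · rw [abs_mul]
      exact mul_le_mul (hg'b ω) (hYb ω) (abs_nonneg _) hC.le
  have hf1int : Integrable (fun ω => (Y ω)^2 + g' ω * g' ω) μ := hY2int.add hg'2int
  have hf2int : Integrable ((2:ℝ) • fun ω => g' ω * Y ω) μ := hg'Yint.smul (2:ℝ)
  have hsplit : (fun ω => (Y ω - g' ω)^2)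
      = (fun ω => (Y ω)^2 + g' ω * g' ω) - (2:ℝ) • fun ω => g' ω * Y ω := by
    funext ω
    simp only [Pi.sub_apply, Pi.smul_apply, smul_eq_mul]
    ring
  have h1 : μ[fun ω => (Y ω - g' ω)^2|m]
      =ᵐ[μ] μ[fun ω => (Y ω)^2 + g' ω * g' ω|m] - μ[(2:ℝ) • fun ω => g' ω * Y ω|m] := by
    rw [hsplit]; exact condExp_sub hf1int hf2int m
  have h2 : μ[fun ω => (Y ω)^2 + g' ω * g' ω|m]
      =ᵐ[μ] μ[fun ω => (Y ω)^2|m] + μ[fun ω => g' ω * g' ω|m] := condExp_add hY2int hg'2int m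
  have h3 : μ[fun ω => g' ω * g' ω|m] = fun ω => g' ω * g' ω :=
    condExp_of_stronglyMeasurable hm (hg'm.mul hg'm) hg'2int
  have h4 : μ[(2:ℝ) • fun ω => g' ω * Y ω|m] =ᵐ[μ] (2:ℝ) • μ[fun ω => g' ω * Y ω|m] :=
    condExp_smul (2:ℝ) _ m
  have h5 : μ[fun ω => g' ω * Y ω|m] =ᵐ[μ] g' * μ[Y|m] :=
    condExp_mul_of_stronglyMeasurable_left hg'm hg'Yint hYint
  have h6 : μ[fun ω => (Y ω - g' ω)^2|m]
      =ᵐ[μ] fun ω => (μ[fun ω' => (Y ω')^2|m]) ω - ((μ[Y|m]) ω)^2 := by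
    filter_upwards [h1, h2, h4, h5, hg'g] with ω e1 e2 e4 e5 eg
    rw [e1, Pi.sub_apply, e2, Pi.add_apply, h3, e4, Pi.smul_apply, e5, smul_eq_mul,
      Pi.mul_apply, eg]
    simp only [eg]
    ring
  filter_upwards [h6] with ω e
  rw [e]
  exact le_max_left _ _

end ThreeSeriesAux

noncomputable def shiftFilt {Ω : Type*} {m0 : MeasurableSpace Ω} (𝒢 : Filtration ℕ m0) :
    Filtration ℕ m0 :=
  ⟨fun n => 𝒢 (n+1), fun n m h => 𝒢.mono (Nat.add_le_add_right h 1), fun n => 𝒢.le (n+1)⟩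

/-- conditional three-series theorem on events.  Let `(X_n)` be adapted to a
filtration `(𝒢_n)` and `C > 0`.  Writing `Y_i = X_i · 1_{|X_i| ≤ C}`, almost surely, on the
event where simultaneously `∑_{i≥2} P(|X_i| > C | 𝒢_{i−1}) < ∞`, the series
`∑_{i≥2} E(Y_i | 𝒢_{i−1})` converges, and
`∑_{i≥2} [E(Y_i² | 𝒢_{i−1}) − (E(Y_i | 𝒢_{i−1}))²] < ∞`, the series `∑_{i≥1} X_i` converges. -/
theorem stmt_7 {Ω : Type*} {m0 : MeasurableSpace Ω} (μ : Measure Ω) [IsProbabilityMeasure μ]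
    (𝒢 : Filtration ℕ m0) (X : ℕ → Ω → ℝ)
    (hadapt : ∀ i, StronglyMeasurable[𝒢 i] (X i))
    (C : ℝ) (hC : 0 < C)
    (Y : ℕ → Ω → ℝ) (hY : ∀ i ω, Y i ω = if |X i ω| ≤ C then X i ω else 0) :
    ∀ᵐ ω ∂μ,
      ((∑' i : ℕ,
          ENNReal.ofReal
            ((μ[Set.indicator {ω' | C < |X (i + 2) ω'|} (fun _ => (1 : ℝ))|𝒢 (i + 1)]) ω) < ⊤) ∧
        (∃ l : ℝ, Filter.Tendsto (fun n => ∑ i ∈ Finset.Icc 2 n, (μ[Y i|𝒢 (i - 1)]) ω)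
            Filter.atTop (nhds l)) ∧
        (∑' i : ℕ,
          ENNReal.ofReal
            ((μ[fun ω' => (Y (i + 2) ω') ^ 2|𝒢 (i + 1)]) ω - ((μ[Y (i + 2)|𝒢 (i + 1)]) ω) ^ 2)
            < ⊤)) →
        ∃ l : ℝ, Filter.Tendsto (fun n => ∑ i ∈ Finset.Icc 1 n, X i ω) Filter.atTop (nhds l) := by
  classical
  set ℱ : Filtration ℕ m0 := shiftFilt 𝒢 with hℱdef
  -- basic facts about Y
  have hYm : ∀ i, StronglyMeasurable[𝒢 i] (Y i) := by
    intro i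
    have he : Y i = fun ω => if |X i ω| ≤ C then X i ω else 0 := funext fun ω => hY i ω
    have hXm : Measurable[𝒢 i] (X i) := (hadapt i).measurable
    have habs : Measurable[𝒢 i] (fun ω => |X i ω|) := measurable_abs.comp hXm
    have hconst : Measurable[𝒢 i] (fun _ : Ω => C) := measurable_const
    have hset : MeasurableSet[𝒢 i] {ω | |X i ω| ≤ C} := measurableSet_le habs hconst
    have hmY : Measurable[𝒢 i] (Y i) := by
      rw [he]; exact Measurable.ite hset hXm measurable_const
    exact hmY.stronglyMeasurable
  have hYb : ∀ i ω, |Y i ω| ≤ C := by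
    intro i ω; rw [hY i ω]
    by_cases h : |X i ω| ≤ C
    · simpa [h] using h
    · simp [h, hC.le]
  have hYint : ∀ i, Integrable (Y i) μ := fun i =>
    my_integrable_of_bdd μ ((hYm i).mono (𝒢.le i)).aestronglyMeasurable (hYb i)
  -- conditional expectations and truncations
  set g : ℕ → Ω → ℝ := fun k => μ[Y (k+2)|ℱ k] with hgdef
  have hgm : ∀ k, StronglyMeasurable[ℱ k] (g k) := fun _ => stronglyMeasurable_condExp
  have hgb : ∀ᵐ ω ∂μ, ∀ k, |g k ω| ≤ C :=
    ae_all_iff.2 fun k => ae_bdd_condExp_of_ae_bdd (R := ⟨C, hC.le⟩)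
      (Eventually.of_forall fun ω => hYb (k+2) ω)
  set g' : ℕ → Ω → ℝ := fun k ω => max (min (g k ω) C) (-C) with hg'def
  have hg'm : ∀ k, StronglyMeasurable[ℱ k] (g' k) := fun k =>
    (((hgm k).measurable.min measurable_const).max measurable_const).stronglyMeasurable
  have hg'b : ∀ k ω, |g' k ω| ≤ C := by
    intro k ω
    rw [abs_le]
    exact ⟨le_max_right _ _, max_le (min_le_right _ _) (by linarith)⟩
  have hg'int : ∀ k, Integrable (g' k) μ := fun k =>
    my_integrable_of_bdd μ ((hg'm k).mono (ℱ.le k)).aestronglyMeasurable (hg'b k)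
  have hg'g : ∀ᵐ ω ∂μ, ∀ k, g' k ω = g k ω := by
    rw [ae_all_iff]
    intro k
    filter_upwards [hgb] with ω h
    have hk := abs_le.mp (h k)
    show max (min (g k ω) C) (-C) = g k ω
    rw [min_eq_left hk.2, max_eq_left hk.1]
  have hg'gae : ∀ k, g' k =ᵐ[μ] g k := by
    intro k; filter_upwards [hg'g] with ω h using h k
  -- the martingale differences
  set Z : ℕ → Ω → ℝ := fun k ω => Y (k+2) ω - g' k ω with hZdef
  have hZm : ∀ k, StronglyMeasurable[ℱ (k+1)] (Z k) := fun k =>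
    StronglyMeasurable.sub (hYm (k+2)) ((hg'm k).mono (ℱ.mono k.le_succ))
  have hZb : ∀ k ω, |Z k ω| ≤ 2*C := by
    intro k ω
    have h1 := abs_le.mp (hYb (k+2) ω)
    have h2 := abs_le.mp (hg'b k ω)
    rw [abs_le]
    constructor
    · show -(2*C) ≤ Y (k+2) ω - g' k ω; linarith
    · show Y (k+2) ω - g' k ω ≤ 2*C; linarith
  have hZ0 : ∀ k, μ[Z k|ℱ k] =ᵐ[μ] 0 := by
    intro k
    have h1 : μ[Z k|ℱ k] =ᵐ[μ] μ[Y (k+2)|ℱ k] - μ[g' k|ℱ k] :=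
      condExp_sub (hYint (k+2)) (hg'int k) (ℱ k)
    have h2 : μ[g' k|ℱ k] = g' k :=
      condExp_of_stronglyMeasurable (ℱ.le k) (hg'm k) (hg'int k)
    refine h1.trans ?_
    rw [h2]
    filter_upwards [hg'gae k] with ω hω
    simp only [Pi.sub_apply, Pi.zero_apply, hω]
    show g k ω - g k ω = 0
    ring
  -- conditional variances
  set v : ℕ → Ω → ℝ := fun k ω =>
    max ((μ[fun ω' => (Y (k+2) ω')^2|ℱ k]) ω - ((μ[Y (k+2)|ℱ k]) ω)^2) 0 with hvdef
  have hvm : ∀ k, StronglyMeasurable[ℱ k] (v k) := by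
    intro k
    exact ((stronglyMeasurable_condExp.measurable.sub
      ((stronglyMeasurable_condExp (f := Y (k+2))).measurable.pow_const 2)).max
      measurable_const).stronglyMeasurable
  have hv0 : ∀ k ω, 0 ≤ v k ω := fun k ω => le_max_right _ _
  have hg2int : ∀ k, Integrable (fun ω => ((μ[Y (k+2)|ℱ k]) ω)^2) μ := by
    intro k
    refine ⟨((stronglyMeasurable_condExp.mono (ℱ.le k)).measurable.pow_const
      2).stronglyMeasurable.aestronglyMeasurable, ?_⟩
    refine HasFiniteIntegral.of_bounded (C := C^2) ?_
    filter_upwards [hgb] with ω h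
    rw [Real.norm_eq_abs, abs_pow]
    exact pow_le_pow_left₀ (abs_nonneg _) (h k) 2
  have hvint : ∀ k, Integrable (v k) μ := fun k =>
    (integrable_condExp.sub (hg2int k)).pos_part
  have hvv : ∀ k, μ[fun ω => (Z k ω)^2|ℱ k] ≤ᵐ[μ] v k := by
    intro k
    exact condexp_sq_bound μ (ℱ.le k) (Y (k+2))
      ((hYm (k+2)).mono (𝒢.le _)).aestronglyMeasurable C hC (hYb (k+2))
      (g' k) (hg'm k) (hg'b k) (hg'gae k)
  have hcore := core_mart μ ℱ Z (2*C) (by positivity) hZm hZb hZ0 v hvm hv0 hvint hvv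
  -- Borel-Cantelli part
  set s : ℕ → Set Ω := fun n => {ω | C < |X (n+1) ω|} with hsdef
  have hsm : ∀ n, MeasurableSet[ℱ n] (s n) := by
    intro n
    have hXm : Measurable[𝒢 (n+1)] (X (n+1)) := (hadapt (n+1)).measurable
    have habs : Measurable[𝒢 (n+1)] (fun ω => |X (n+1) ω|) := measurable_abs.comp hXm
    have hconst : Measurable[𝒢 (n+1)] (fun _ : Ω => C) := measurable_const
    have : MeasurableSet[𝒢 (n+1)] {ω | C < |X (n+1) ω|} :=
      measurableSet_lt hconst habs
    exact this
  have hbc := ae_mem_limsup_atTop_iff μ hsm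
  have hpos : ∀ᵐ ω ∂μ, ∀ k, 0 ≤ (μ[(s (k+1)).indicator (1:Ω → ℝ)|ℱ k]) ω :=
    ae_all_iff.2 fun k => condExp_nonneg
      (Eventually.of_forall fun ω => Set.indicator_nonneg (fun _ _ => zero_le_one) ω)
  -- main assembly
  filter_upwards [hcore, hbc, hpos, hg'g] with ω hcoreω hbcω hposω hg'gω
  rintro ⟨ha, ⟨l1, hl1⟩, hc⟩
  -- (1) eventually X = Y
  have hnotmem : ω ∉ limsup s atTop := by
    intro hmem
    have htends := hbcω.mp hmem
    set q : ℕ → ℝ := fun k => (μ[(s (k+1)).indicator (1:Ω → ℝ)|ℱ k]) ω with hqdef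
    have hafin : (∑' k, ENNReal.ofReal (q k)) < ⊤ := ha
    set B : ℝ := (∑' k, ENNReal.ofReal (q k)).toReal with hBdef
    have hq : ∀ m, ∑ k ∈ Finset.range m, q k ≤ B := by
      intro m
      have h1 : ENNReal.ofReal (∑ k ∈ Finset.range m, q k)
          = ∑ k ∈ Finset.range m, ENNReal.ofReal (q k) :=
        ENNReal.ofReal_sum_of_nonneg fun k _ => hposω k
      rw [hBdef, ← ENNReal.toReal_ofReal (Finset.sum_nonneg fun k _ => hposω k), h1]
      exact ENNReal.toReal_mono hafin.ne (ENNReal.sum_le_tsum _)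
    obtain ⟨n, hn⟩ := (htends.eventually (eventually_gt_atTop B)).exists
    exact absurd hn (not_lt.2 (hq n))
  obtain ⟨N, hN⟩ := eventually_atTop.mp
    ((Filter.not_frequently).mp (fun h => hnotmem (mem_limsup_iff_frequently_mem.mpr h)))
  have hXY : ∀ i, N + 1 ≤ i → X i ω = Y i ω := by
    intro i hi
    have h1 : ω ∉ s (i - 1) := hN (i-1) (by omega)
    have h2 : i - 1 + 1 = i := by omega
    rw [hsdef] at h1
    simp only [Set.mem_setOf_eq, h2, not_lt] at h1
    rw [hY i ω, if_pos h1]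
  -- (2) convergence of conditional-expectation sums
  have hgsum : Tendsto (fun m => ∑ k ∈ Finset.range m, g k ω) atTop (𝓝 l1) := by
    have hcomp := hl1.comp (tendsto_add_atTop_nat 1)
    refine hcomp.congr fun m => ?_
    show ∑ i ∈ Finset.Icc 2 (m+1), (μ[Y i|𝒢 (i-1)]) ω = ∑ k ∈ Finset.range m, g k ω
    rw [← Finset.Ico_add_one_right_eq_Icc, Finset.sum_Ico_eq_sum_range]
    refine Finset.sum_congr rfl fun k _ => ?_
    have h2 : 2 + k = k + 2 := by omega
    rw [h2]
    rfl
  -- (3) convergence of martingale part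
  have hfin : (∑' k, ENNReal.ofReal (v k ω)) < ⊤ := by
    have heq : ∀ k : ℕ, ENNReal.ofReal (v k ω)
        = ENNReal.ofReal
            ((μ[fun ω' => (Y (k + 2) ω') ^ 2|𝒢 (k + 1)]) ω
              - ((μ[Y (k + 2)|𝒢 (k + 1)]) ω) ^ 2) := by
      intro k
      have h0 : v k ω = max ((μ[fun ω' => (Y (k + 2) ω') ^ 2|𝒢 (k + 1)]) ω
          - ((μ[Y (k + 2)|𝒢 (k + 1)]) ω) ^ 2) 0 := rfl
      rw [h0]
      rcases le_total ((μ[fun ω' => (Y (k + 2) ω') ^ 2|𝒢 (k + 1)]) ω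
          - ((μ[Y (k + 2)|𝒢 (k + 1)]) ω) ^ 2) 0 with h|h
      · rw [max_eq_right h, ENNReal.ofReal_zero]
        exact (ENNReal.ofReal_of_nonpos h).symm
      · rw [max_eq_left h]
    rw [tsum_congr heq]
    exact hc
  obtain ⟨l2, hl2⟩ := hcoreω hfin
  -- (4) convergence of partial sums of Y starting from 2
  have hTY : Tendsto (fun m => ∑ k ∈ Finset.range m, Y (k+2) ω) atTop (𝓝 (l2 + l1)) := by
    refine (hl2.add hgsum).congr fun m => ?_
    rw [← Finset.sum_add_distrib]
    refine Finset.sum_congr rfl fun k _ => ?_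
    show Z k ω + g k ω = Y (k+2) ω
    rw [hZdef]
    simp only
    rw [hg'gω k]
    ring
  have hH : Tendsto (fun n => ∑ i ∈ Finset.Ioc 1 n, Y i ω) atTop (𝓝 (l2 + l1)) := by
    have hcomp := hTY.comp (tendsto_sub_atTop_nat 1)
    refine hcomp.congr fun n => ?_
    show ∑ k ∈ Finset.range (n - 1), Y (k+2) ω = ∑ i ∈ Finset.Ioc 1 n, Y i ω
    rw [← Finset.Icc_add_one_left_eq_Ioc, ← Finset.Ico_add_one_right_eq_Icc, Finset.sum_Ico_eq_sum_range]
    have h2 : n + 1 - (1+1) = n - 1 := by omega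
    rw [h2]
    refine Finset.sum_congr rfl fun k _ => ?_
    have h3 : 1 + 1 + k = k + 2 := by omega
    rw [h3]
  -- (5) final assembly
  set N' : ℕ := max (N + 1) 2 with hN'def
  have hN'2 : 2 ≤ N' := le_max_right _ _
  have hkey : ∀ n, N' ≤ n →
      ∑ i ∈ Finset.Icc 1 n, X i ω
        = (∑ i ∈ Finset.Icc 1 N', X i ω - ∑ i ∈ Finset.Ioc 1 N', Y i ω)
          + ∑ i ∈ Finset.Ioc 1 n, Y i ω := by
    intro n hn
    have e1 : ∑ i ∈ Finset.Icc 1 N', X i ω + ∑ i ∈ Finset.Ioc N' n, X i ω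
        = ∑ i ∈ Finset.Icc 1 n, X i ω := by
      have i1 : Finset.Icc 1 N' = Finset.Ioc 0 N' := Finset.Icc_add_one_left_eq_Ioc 0 N'
      have i2 : Finset.Icc 1 n = Finset.Ioc 0 n := Finset.Icc_add_one_left_eq_Ioc 0 n
      rw [i1, i2]
      exact Finset.sum_Ioc_consecutive _ (Nat.zero_le N') hn
    have e2 : ∑ i ∈ Finset.Ioc 1 N', Y i ω + ∑ i ∈ Finset.Ioc N' n, Y i ω
        = ∑ i ∈ Finset.Ioc 1 n, Y i ω :=
      Finset.sum_Ioc_consecutive _ (by omega) hn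
    have e3 : ∑ i ∈ Finset.Ioc N' n, X i ω = ∑ i ∈ Finset.Ioc N' n, Y i ω :=
      Finset.sum_congr rfl fun i hi => hXY i (by
        have := (Finset.mem_Ioc.mp hi).1; omega)
    linarith [e1, e2, e3]
  refine ⟨(∑ i ∈ Finset.Icc 1 N', X i ω - ∑ i ∈ Finset.Ioc 1 N', Y i ω) + (l2 + l1), ?_⟩
  refine Tendsto.congr' ?_ (tendsto_const_nhds.add hH)
  filter_upwards [eventually_ge_atTop N'] with n hn
  exact (hkey n hn).symm
end

section
/- There exists an absolute constant C > 0 with the following property: for every finite measure μ on a measurable space, every n ≥ 2, and every finite family θ_1, …, θ_n of square-integrable real functions that are pairwise orthogonal in L²(μ) (∫ θ_i θ_j dμ = 0 for i ≠ j), the partial sums S_i = ∑_{j=1}^i θ_j satisfy ∫ max_{1≤i≤n} S_i² dμ ≤ C (log n)² ∑_{i=1}^n ∫ θ_i² dμ. -/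
open Filter Finset MeasureTheory
open scoped ENNReal

section RM
variable {α : Type} [MeasurableSpace α] {μ : Measure α}

private lemma rm_integrable_mul
    {f g : α → ℝ} (hf : MemLp f 2 μ) (hg : MemLp g 2 μ) :
    Integrable (fun x => f x * g x) μ := by
  refine Integrable.mono' ((hf.integrable_sq.add hg.integrable_sq).div_const 2)
    (hf.aestronglyMeasurable.mul hg.aestronglyMeasurable)
    (Filter.Eventually.of_forall fun x => ?_)
  have h := two_mul_le_add_sq (f x) (g x)
  have h' := two_mul_le_add_sq (f x) (-g x)
  rw [Real.norm_eq_abs, abs_mul, Pi.add_apply]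
  rcases abs_cases (f x) with ⟨hf1, _⟩ | ⟨hf1, _⟩ <;>
    rcases abs_cases (g x) with ⟨hg1, _⟩ | ⟨hg1, _⟩ <;>
      rw [hf1, hg1] <;> nlinarith

private lemma rm_telescope {M : Type*} [AddCommMonoid M] (f : ℕ → M) (i : ℕ) :
    ∀ K : ℕ, ∑ k ∈ range K,
        ∑ j ∈ Finset.Ioc (2 ^ (k + 1) * (i / 2 ^ (k + 1))) (2 ^ k * (i / 2 ^ k)), f j
      = ∑ j ∈ Finset.Ioc (2 ^ K * (i / 2 ^ K)) i, f j := by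
  intro K
  induction K with
  | zero => simp [Nat.div_one]
  | succ K ih =>
    rw [Finset.sum_range_succ, ih]
    have h1 : 2 ^ (K + 1) * (i / 2 ^ (K + 1)) ≤ 2 ^ K * (i / 2 ^ K) := by
      have : 2 * (i / 2 ^ K / 2) ≤ i / 2 ^ K := by omega
      calc 2 ^ (K + 1) * (i / 2 ^ (K + 1)) = 2 ^ K * (2 * (i / 2 ^ K / 2)) := by
            rw [pow_succ, Nat.div_div_eq_div_mul]; ring
        _ ≤ 2 ^ K * (i / 2 ^ K) := Nat.mul_le_mul_left _ this
    have h2 : 2 ^ K * (i / 2 ^ K) ≤ i := Nat.mul_div_le i (2 ^ K) |>.trans_eq rfl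
    rw [add_comm]
    exact Finset.sum_Ioc_consecutive f h1 h2

private lemma rm_integral_sq_sum
    (θ : ℕ → α → ℝ) (s : Finset ℕ) (hmem : ∀ j ∈ s, MemLp (θ j) 2 μ)
    (horth : ∀ j ∈ s, ∀ j' ∈ s, j ≠ j' → ∫ x, θ j x * θ j' x ∂μ = 0) :
    ∫ x, (∑ j ∈ s, θ j x) ^ 2 ∂μ = ∑ j ∈ s, ∫ x, θ j x ^ 2 ∂μ := by
  have h1 : ∀ x, (∑ j ∈ s, θ j x) ^ 2 = ∑ j ∈ s, ∑ j' ∈ s, θ j x * θ j' x := fun x => by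
    rw [sq, Finset.sum_mul_sum]
  simp_rw [h1]
  rw [integral_finset_sum s (fun j hj => integrable_finset_sum s
    (fun j' hj' => rm_integrable_mul (hmem j hj) (hmem j' hj')))]
  refine Finset.sum_congr rfl fun j hj => ?_
  rw [integral_finset_sum s (fun j' hj' => rm_integrable_mul (hmem j hj) (hmem j' hj')),
    Finset.sum_eq_single_of_mem j hj (fun j' hj' hne => horth j hj j' hj' (Ne.symm hne))]
  simp_rw [← sq]

end RM

/-- Rademacher–Menchoff maximal inequality.  There is an absolute constant
`C > 0` such that for every finite measure `μ`, every `n ≥ 2`, and every family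
`θ_1, …, θ_n` of square-integrable, pairwise orthogonal functions, the partial sums
`S_i = ∑_{j=1}^i θ_j` satisfy
`∫ max_{1≤i≤n} S_i² dμ ≤ C (log n)² ∑_{i=1}^n ∫ θ_i² dμ`. -/
theorem stmt_8 :
    ∃ C : ℝ, 0 < C ∧
      ∀ (α : Type) [MeasurableSpace α] (μ : Measure α) [IsFiniteMeasure μ]
        (n : ℕ), 2 ≤ n → ∀ θ : ℕ → α → ℝ,
        (∀ i ∈ Finset.Icc 1 n, MemLp (θ i) 2 μ) →
        (∀ i ∈ Finset.Icc 1 n, ∀ j ∈ Finset.Icc 1 n, i ≠ j →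
          ∫ x, θ i x * θ j x ∂μ = 0) →
        ∫⁻ x, ENNReal.ofReal (⨆ i ∈ Finset.Icc 1 n, (∑ j ∈ Finset.Icc 1 i, θ j x) ^ 2) ∂μ ≤
          ENNReal.ofReal
            (C * Real.log n ^ 2 * ∑ i ∈ Finset.Icc 1 n, ∫ x, (θ i x) ^ 2 ∂μ) := by
  refine ⟨25, by norm_num, ?_⟩
  intro α _ μ _ n hn θ hmem horth
  classical
  set L := Nat.clog 2 n with hLdef
  set c : ℝ := (L : ℝ) + 1 with hcdef
  have hc0 : 0 ≤ c := by positivity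
  -- blocks
  set B : ℕ → ℕ → Finset ℕ := fun k m =>
    Finset.Ioc (2 ^ (k + 1) * m) (min (2 ^ (k + 1) * m + 2 ^ k) n) with hBdef
  have hBsub : ∀ k m, B k m ⊆ Finset.Icc 1 n := by
    intro k m j hj
    simp only [hBdef, Finset.mem_Ioc] at hj
    simp only [Finset.mem_Icc]
    omega
  set T : ℕ → ℕ → α → ℝ := fun k m x => ∑ j ∈ B k m, θ j x with hTdef
  have hTmem : ∀ k m, MemLp (T k m) 2 μ := fun k m =>
    memLp_finset_sum _ (fun j hj => hmem j (hBsub k m hj))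
  have hTsq : ∀ k m, Integrable (fun x => T k m x ^ 2) μ := fun k m =>
    (hTmem k m).integrable_sq
  set G : α → ℝ := fun x => ∑ k ∈ range (L + 1), ∑ m ∈ range n, T k m x ^ 2 with hGdef
  have hGnn : ∀ x, 0 ≤ G x := fun x =>
    Finset.sum_nonneg fun k _ => Finset.sum_nonneg fun m _ => sq_nonneg _
  have hGint : Integrable G μ :=
    integrable_finset_sum _ (fun k _ => integrable_finset_sum _ (fun m _ => hTsq k m))
  have hnpow : n ≤ 2 ^ L := Nat.le_pow_clog (by norm_num) n
  -- pointwise bound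
  have key : ∀ x, (⨆ i ∈ Finset.Icc 1 n, (∑ j ∈ Finset.Icc 1 i, θ j x) ^ 2) ≤ c * G x := by
    intro x
    have hb0 : 0 ≤ c * G x := mul_nonneg hc0 (hGnn x)
    refine Real.iSup_le (fun i => Real.iSup_le (fun hi => ?_) hb0) hb0
    rw [Finset.mem_Icc] at hi
    -- decomposition
    have hdec : ∑ j ∈ Finset.Icc 1 i, θ j x
        = ∑ k ∈ range (L + 1),
            ∑ j ∈ Finset.Ioc (2 ^ (k + 1) * (i / 2 ^ (k + 1))) (2 ^ k * (i / 2 ^ k)), θ j x := by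
      rw [rm_telescope (fun j => θ j x) i (L + 1)]
      have hz : i / 2 ^ (L + 1) = 0 := by
        apply Nat.div_eq_of_lt
        calc i ≤ n := hi.2
          _ ≤ 2 ^ L := hnpow
          _ < 2 ^ (L + 1) := by
              have : (0:ℕ) < 2 ^ L := pow_pos (by norm_num) L
              omega
      rw [hz, Nat.mul_zero, ← Finset.Icc_add_one_left_eq_Ioc, zero_add]
    have hCS : (∑ j ∈ Finset.Icc 1 i, θ j x) ^ 2
        ≤ c * ∑ k ∈ range (L + 1),
            (∑ j ∈ Finset.Ioc (2 ^ (k + 1) * (i / 2 ^ (k + 1))) (2 ^ k * (i / 2 ^ k)), θ j x) ^ 2 := by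
      rw [hdec]
      have := sq_sum_le_card_mul_sum_sq (s := range (L + 1))
        (f := fun k => ∑ j ∈ Finset.Ioc (2 ^ (k + 1) * (i / 2 ^ (k + 1))) (2 ^ k * (i / 2 ^ k)), θ j x)
      simpa [hcdef] using this
    refine hCS.trans ?_
    apply mul_le_mul_of_nonneg_left _ hc0
    apply Finset.sum_le_sum
    intro k _
    -- per-level bound
    set q := i / 2 ^ (k + 1) with hq
    have hdiv : i / 2 ^ (k + 1) = i / 2 ^ k / 2 := by
      rw [pow_succ, ← Nat.div_div_eq_div_mul]
    have hbit : i / 2 ^ k = 2 * q + i / 2 ^ k % 2 := by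
      rw [hq, hdiv]; omega
    rcases Nat.mod_two_eq_zero_or_one (i / 2 ^ k) with hb | hb
    · -- empty block
      have he : 2 ^ k * (i / 2 ^ k) = 2 ^ (k + 1) * q := by
        rw [hbit, hb, pow_succ]; ring
      rw [he, Finset.Ioc_self, Finset.sum_empty]
      have : (0:ℝ) ≤ ∑ m ∈ range n, T k m x ^ 2 :=
        Finset.sum_nonneg fun m _ => sq_nonneg _
      simpa using this
    · -- full block
      have he : 2 ^ k * (i / 2 ^ k) = 2 ^ (k + 1) * q + 2 ^ k := by
        rw [hbit, hb, pow_succ]; ring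
      have hei : 2 ^ k * (i / 2 ^ k) ≤ i := Nat.mul_div_le i (2 ^ k)
      have hqn : q < n := by
        have h1 : 2 ^ (k + 1) * q + 2 ^ k ≤ n := by omega
        have h2 : q ≤ 2 ^ (k + 1) * q := Nat.le_mul_of_pos_left q (pow_pos (by norm_num) _)
        have h3 : (0:ℕ) < 2 ^ k := pow_pos (by norm_num) _
        omega
      have hmin : min (2 ^ (k + 1) * q + 2 ^ k) n = 2 ^ (k + 1) * q + 2 ^ k :=
        min_eq_left (by omega)
      have hTeq : (∑ j ∈ Finset.Ioc (2 ^ (k + 1) * q) (2 ^ k * (i / 2 ^ k)), θ j x) = T k q x := by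
        rw [he, hTdef]
        simp only [hBdef, hmin]
      rw [hTeq]
      exact Finset.single_le_sum (fun m _ => sq_nonneg (T k m x)) (Finset.mem_range.mpr hqn)
  -- integral computations
  set E : ℝ := ∑ i ∈ Finset.Icc 1 n, ∫ x, (θ i x) ^ 2 ∂μ with hEdef
  have hEnn : 0 ≤ E :=
    Finset.sum_nonneg fun i _ => integral_nonneg fun x => sq_nonneg _
  have hTint_eq : ∀ k m, ∫ x, T k m x ^ 2 ∂μ = ∑ j ∈ B k m, ∫ x, θ j x ^ 2 ∂μ := by
    intro k m
    exact rm_integral_sq_sum θ (B k m) (fun j hj => hmem j (hBsub k m hj))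
      (fun j hj j' hj' hne => horth j (hBsub k m hj) j' (hBsub k m hj') hne)
  have hdisj : ∀ k, Set.PairwiseDisjoint ↑(range n) (B k) := by
    intro k m _ m' _ hne
    have h3 : (0:ℕ) < 2 ^ k := pow_pos (by norm_num) _
    refine Finset.disjoint_left.mpr fun j hj hj' => ?_
    simp only [hBdef, Finset.mem_Ioc] at hj hj'
    have e1 := hj.1; have e2 : j ≤ 2 ^ (k + 1) * m + 2 ^ k := hj.2.trans (min_le_left _ _)
    have e3 := hj'.1; have e4 : j ≤ 2 ^ (k + 1) * m' + 2 ^ k := hj'.2.trans (min_le_left _ _)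
    have hps : 2 ^ k < 2 ^ (k + 1) := by
      have h3 : (0:ℕ) < 2 ^ k := pow_pos (by norm_num) _
      rw [pow_succ]; omega
    rcases Nat.lt_or_ge m m' with h | h
    · have hmono : 2 ^ (k + 1) * (m + 1) ≤ 2 ^ (k + 1) * m' := Nat.mul_le_mul_left _ (by omega)
      have hlink : 2 ^ (k + 1) * m + 2 ^ k < 2 ^ (k + 1) * (m + 1) := by
        rw [Nat.mul_succ]; omega
      exact lt_irrefl j (((e2.trans_lt hlink).trans_le hmono).trans e3)
    · have hlt : m' < m := lt_of_le_of_ne h (Ne.symm hne)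
      have hmono : 2 ^ (k + 1) * (m' + 1) ≤ 2 ^ (k + 1) * m := Nat.mul_le_mul_left _ (by omega)
      have hlink : 2 ^ (k + 1) * m' + 2 ^ k < 2 ^ (k + 1) * (m' + 1) := by
        rw [Nat.mul_succ]; omega
      exact lt_irrefl j (((e4.trans_lt hlink).trans_le hmono).trans e1)
  have hlevel : ∀ k, ∑ m ∈ range n, ∫ x, T k m x ^ 2 ∂μ ≤ E := by
    intro k
    calc ∑ m ∈ range n, ∫ x, T k m x ^ 2 ∂μ
        = ∑ m ∈ range n, ∑ j ∈ B k m, ∫ x, θ j x ^ 2 ∂μ := by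
          exact Finset.sum_congr rfl fun m _ => hTint_eq k m
      _ = ∑ j ∈ (range n).biUnion (B k), ∫ x, θ j x ^ 2 ∂μ :=
          (Finset.sum_biUnion (hdisj k)).symm
      _ ≤ E := by
          refine Finset.sum_le_sum_of_subset_of_nonneg ?_ ?_
          · intro j hj
            rw [Finset.mem_biUnion] at hj
            obtain ⟨m, _, hjm⟩ := hj
            exact hBsub k m hjm
          · intro j _ _
            exact integral_nonneg fun x => sq_nonneg _
  have hGle : ∫ x, G x ∂μ ≤ c * E := by
    rw [hGdef]
    rw [integral_finset_sum _ (fun k _ => integrable_finset_sum _ (fun m _ => hTsq k m))]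
    have : ∀ k ∈ range (L + 1), ∫ x, ∑ m ∈ range n, T k m x ^ 2 ∂μ ≤ E := by
      intro k _
      rw [integral_finset_sum _ (fun m _ => hTsq k m)]
      exact hlevel k
    calc ∑ k ∈ range (L + 1), ∫ x, ∑ m ∈ range n, T k m x ^ 2 ∂μ
        ≤ ∑ _k ∈ range (L + 1), E := Finset.sum_le_sum this
      _ = (L + 1 : ℕ) * E := by rw [Finset.sum_const, Finset.card_range, nsmul_eq_mul]
      _ = c * E := by push_cast [hcdef]; ring
  -- log bound
  have hc5 : c ≤ 5 * Real.log n := by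
    have hL1 : 1 ≤ L := by
      by_contra h
      push_neg at h
      interval_cases L
      · simp at hnpow; omega
    have hpow : 2 ^ (L - 1) < n := Nat.pow_pred_clog_lt_self (by norm_num) (by omega)
    have hlog2 : (0.6931471803 : ℝ) < Real.log 2 := Real.log_two_gt_d9
    have hlogn : Real.log 2 ≤ Real.log n :=
      Real.log_le_log (by norm_num) (by exact_mod_cast hn)
    have hpowR : ((L - 1 : ℕ) : ℝ) * Real.log 2 ≤ Real.log n := by
      rw [← Real.log_pow]
      apply Real.log_le_log (by positivity)
      exact_mod_cast hpow.le
    have hcast : ((L - 1 : ℕ) : ℝ) = (L : ℝ) - 1 := by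
      push_cast [Nat.cast_sub hL1]; ring
    rw [hcast] at hpowR
    rw [hcdef]
    nlinarith [hpowR, hlog2, hlogn, mul_nonneg (le_of_lt (lt_trans (by norm_num) hlog2))
      (sub_nonneg.mpr hlogn)]
  -- conclusion
  calc ∫⁻ x, ENNReal.ofReal (⨆ i ∈ Finset.Icc 1 n, (∑ j ∈ Finset.Icc 1 i, θ j x) ^ 2) ∂μ
      ≤ ∫⁻ x, ENNReal.ofReal (c * G x) ∂μ :=
        lintegral_mono fun x => ENNReal.ofReal_le_ofReal (key x)
    _ = ENNReal.ofReal (∫ x, c * G x ∂μ) :=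
        (ofReal_integral_eq_lintegral_ofReal (hGint.const_mul c)
          (Filter.Eventually.of_forall fun x => mul_nonneg hc0 (hGnn x))).symm
    _ ≤ ENNReal.ofReal (25 * Real.log n ^ 2 * E) := by
        apply ENNReal.ofReal_le_ofReal
        rw [integral_const_mul]
        have h1 : c * ∫ x, G x ∂μ ≤ c * (c * E) :=
          mul_le_mul_of_nonneg_left hGle hc0
        refine h1.trans ?_
        have hlogpos : 0 ≤ Real.log n := Real.log_nonneg (by exact_mod_cast hn.trans' (by norm_num))
        nlinarith [hc5, hc0, hEnn, mul_nonneg hlogpos hlogpos, sq_nonneg (5 * Real.log n - c),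
          mul_le_mul_of_nonneg_right (mul_le_mul hc5 hc5 hc0 (by positivity)) hEnn]
end

section
/- Let μ be a finite measure on a measurable space and let (φ_i)_{i≥1} be an orthonormal system in L²(μ), i.e. ∫ φ_i φ_j dμ = 0 for i ≠ j and ∫ φ_i² dμ = 1 for all i. If the real coefficients (c_i)_{i≥1} satisfy ∑_{i≥2} c_i² (log i)² < ∞, then the series ∑_{i≥1} c_i φ_i(x) converges (its partial sums converge) for μ-almost every x. -/
open Filter Finset MeasureTheory
open scoped ENNReal

namespace RM9aux

/-- The sum of squares of all dyadic block increments of `s` over `[a, a + 2^k]`. -/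
def QQ (s : ℕ → ℝ) (a k : ℕ) : ℝ :=
  ∑ j ∈ Finset.range (k+1), ∑ m ∈ Finset.range (2^(k-j)),
    (s (a + (m+1) * 2^j) - s (a + m * 2^j))^2

lemma QQ_nonneg (s : ℕ → ℝ) (a k : ℕ) : 0 ≤ QQ s a k :=
  Finset.sum_nonneg fun _ _ => Finset.sum_nonneg fun _ _ => sq_nonneg _

lemma QQ_succ (s : ℕ → ℝ) (a k : ℕ) :
    QQ s a (k+1) = (s (a + 2^(k+1)) - s a)^2 + QQ s a k + QQ s (a + 2^k) k := by
  unfold QQ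
  rw [Finset.sum_range_succ]
  have hlast : ∑ m ∈ Finset.range (2^(k+1-(k+1))),
      (s (a + (m+1) * 2^(k+1)) - s (a + m * 2^(k+1)))^2 = (s (a + 2^(k+1)) - s a)^2 := by
    simp
  rw [hlast]
  have hsplit : ∀ j ∈ Finset.range (k+1),
      ∑ m ∈ Finset.range (2^(k+1-j)), (s (a + (m+1) * 2^j) - s (a + m * 2^j))^2
      = (∑ m ∈ Finset.range (2^(k-j)), (s (a + (m+1) * 2^j) - s (a + m * 2^j))^2)
      + ∑ m ∈ Finset.range (2^(k-j)),
          (s ((a+2^k) + (m+1) * 2^j) - s ((a+2^k) + m * 2^j))^2 := by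
    intro j hj
    have hj' : j ≤ k := Nat.lt_succ_iff.mp (Finset.mem_range.mp hj)
    have h2 : 2^(k+1-j) = 2^(k-j) + 2^(k-j) := by
      rw [show k+1-j = (k-j)+1 by omega, pow_succ]; ring
    rw [h2, Finset.sum_range_add]
    congr 1
    refine Finset.sum_congr rfl fun m _ => ?_
    have hp : 2^(k-j) * 2^j = 2^k := by rw [← pow_add]; congr 1; omega
    have e1 : a + (2^(k-j) + m + 1) * 2^j = (a + 2^k) + (m+1) * 2^j := by
      calc a + (2^(k-j) + m + 1) * 2^j = a + 2^(k-j) * 2^j + (m+1) * 2^j := by ring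
        _ = (a + 2^k) + (m+1) * 2^j := by rw [hp]
    have e2 : a + (2^(k-j) + m) * 2^j = (a + 2^k) + m * 2^j := by
      calc a + (2^(k-j) + m) * 2^j = a + 2^(k-j) * 2^j + m * 2^j := by ring
        _ = (a + 2^k) + m * 2^j := by rw [hp]
    rw [e1, e2]
  rw [Finset.sum_congr rfl hsplit, Finset.sum_add_distrib]
  ring

/-- Key maximal estimate: for `a ≤ n ≤ a + 2^k`,
`(s n - s a)^2 ≤ (k+1) * QQ s a k`. -/
lemma key (s : ℕ → ℝ) : ∀ (k a n : ℕ), a ≤ n → n ≤ a + 2^k →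
    (s n - s a)^2 ≤ ((k:ℝ)+1) * QQ s a k := by
  intro k
  induction k with
  | zero =>
    intro a n h1 h2
    have hQ := QQ_nonneg s a 0
    have hQe : QQ s a 0 = (s (a+1) - s a)^2 := by unfold QQ; simp
    have hn : n = a ∨ n = a + 1 := by omega
    push_cast
    rcases hn with h | h <;> subst h
    · nlinarith [hQ]
    · rw [hQe]; nlinarith [sq_nonneg (s (a+1) - s a)]
  | succ k ih =>
    intro a n h1 h2
    rw [QQ_succ]
    have q1 := QQ_nonneg s a k
    have q2 := QQ_nonneg s (a+2^k) k
    have hd : (0:ℝ) ≤ (s (a + 2^(k+1)) - s a)^2 := sq_nonneg _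
    have hKnn : (0:ℝ) ≤ (k:ℝ) := Nat.cast_nonneg k
    by_cases hn : n ≤ a + 2^k
    · have h := ih a n h1 hn
      push_cast
      nlinarith
    · push_neg at hn
      have hu : (s (a + 2^k) - s a)^2 ≤ QQ s a k := by
        have h1' : (s (a + 2^k) - s a)^2
            = ∑ m ∈ Finset.range (2^(k-k)), (s (a + (m+1)*2^k) - s (a + m*2^k))^2 := by
          simp
        rw [h1']
        exact Finset.single_le_sum
          (f := fun j => ∑ m ∈ Finset.range (2^(k-j)), (s (a+(m+1)*2^j) - s (a+m*2^j))^2)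
          (fun j _ => Finset.sum_nonneg fun m _ => sq_nonneg _) (Finset.self_mem_range_succ k)
      have hpow : a + 2^(k+1) = (a + 2^k) + 2^k := by rw [pow_succ]; ring
      have hv := ih (a + 2^k) n (le_of_lt hn) (by omega)
      have expand : s n - s a = (s (a+2^k) - s a) + (s n - s (a+2^k)) := by ring
      rw [expand]
      push_cast
      set u := s (a+2^k) - s a with hu'
      set v := s n - s (a+2^k) with hv'
      set D := s (a + 2^(k+1)) - s a with hD'
      have hpos : (0:ℝ) < (k:ℝ)+1 := by positivity
      have hstep : ((k:ℝ)+1) * ((u+v)^2)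
          ≤ ((k:ℝ)+1) * (((k:ℝ)+1+1) * (D^2 + QQ s a k + QQ s (a+2^k) k)) := by
        nlinarith [sq_nonneg (((k:ℝ)+1)*u - v),
          mul_le_mul_of_nonneg_left hu (by positivity : (0:ℝ) ≤ ((k:ℝ)+1)*((k:ℝ)+2)),
          mul_le_mul_of_nonneg_left hv (by positivity : (0:ℝ) ≤ (k:ℝ)+2),
          mul_nonneg (by positivity : (0:ℝ) ≤ ((k:ℝ)+1)*((k:ℝ)+2)) hd]
      exact le_of_mul_le_mul_left hstep hpos

/-- If the integrals of nonnegative integrable functions are summable, then the functions are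
a.e. summable. -/
lemma ae_summable {α : Type*} [MeasurableSpace α] (μ : Measure α) (g : ℕ → α → ℝ)
    (hnn : ∀ K x, 0 ≤ g K x) (hint : ∀ K, Integrable (g K) μ)
    (hsum : Summable fun K => ∫ x, g K x ∂μ) :
    ∀ᵐ x ∂μ, Summable fun K => g K x := by
  have hmeas : ∀ K, AEMeasurable (fun x => ENNReal.ofReal (g K x)) μ :=
    fun K => ((hint K).aestronglyMeasurable.aemeasurable).ennreal_ofReal
  have h1 : ∫⁻ x, ∑' K, ENNReal.ofReal (g K x) ∂μ
      = ∑' K, ∫⁻ x, ENNReal.ofReal (g K x) ∂μ := lintegral_tsum hmeas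
  have h2 : ∀ K, ∫⁻ x, ENNReal.ofReal (g K x) ∂μ = ENNReal.ofReal (∫ x, g K x ∂μ) :=
    fun K => (MeasureTheory.ofReal_integral_eq_lintegral_ofReal (hint K)
      (Filter.Eventually.of_forall (hnn K))).symm
  have h4 : ∫⁻ x, ∑' K, ENNReal.ofReal (g K x) ∂μ < ⊤ := by
    rw [h1]
    simp_rw [h2]
    rw [← ENNReal.ofReal_tsum_of_nonneg (fun K => integral_nonneg (hnn K)) hsum]
    exact ENNReal.ofReal_lt_top
  have h5 := ae_lt_top' (AEMeasurable.ennreal_tsum hmeas) h4.ne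
  filter_upwards [h5] with x hx
  have hs := ENNReal.summable_toReal hx.ne
  have he : (fun K => (ENNReal.ofReal (g K x)).toReal) = fun K => g K x := by
    funext K; rw [ENNReal.toReal_ofReal (hnn K x)]
  rwa [he] at hs

end RM9aux

open RM9aux

/-- Rademacher–Menchoff theorem.  Let `(φ_i)_{i≥1}` be an orthonormal system
in `L²(μ)` for a finite measure `μ`.  If `∑_{i≥2} c_i² (log i)² < ∞`, then the orthogonal
series `∑_{i≥1} c_i φ_i(x)` converges for `μ`-almost every `x`. -/
theorem stmt_9 {α : Type*} [MeasurableSpace α] (μ : Measure α) [IsFiniteMeasure μ]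
    (φ : ℕ → α → ℝ)
    (hL2 : ∀ i, 1 ≤ i → MemLp (φ i) 2 μ)
    (horth : ∀ i j, 1 ≤ i → 1 ≤ j → i ≠ j → ∫ x, φ i x * φ j x ∂μ = 0)
    (hnorm : ∀ i, 1 ≤ i → ∫ x, (φ i x) ^ 2 ∂μ = 1)
    (c : ℕ → ℝ) (hc : Summable fun i => c i ^ 2 * Real.log i ^ 2) :
    ∀ᵐ x ∂μ, ∃ l : ℝ,
      Filter.Tendsto (fun n => ∑ i ∈ Finset.Icc 1 n, c i * φ i x) Filter.atTop (nhds l) := by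
  classical
  set f : ℕ → α → ℝ := fun i x => c i * φ i x with hfdef
  have hfmem : ∀ i, 1 ≤ i → MemLp (f i) 2 μ := fun i hi => (hL2 i hi).const_mul (c i)
  -- products of L² functions are integrable
  have hmul : ∀ g h : α → ℝ, MemLp g 2 μ → MemLp h 2 μ →
      Integrable (fun x => g x * h x) μ := by
    intro g h hg hh
    rw [← memLp_one_iff_integrable]
    have hpqr : (1:ℝ≥0∞)/1 = 1/2 + 1/2 := by
      rw [ENNReal.add_halves]; simp
    have := hh.smul (p := 2) (q := 2) (r := 1) hg
    exact this
  have hintmul : ∀ i j, 1 ≤ i → 1 ≤ j → Integrable (fun x => f i x * f j x) μ :=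
    fun i j hi hj => hmul _ _ (hfmem i hi) (hfmem j hj)
  have hfint : ∀ i j, 1 ≤ i → 1 ≤ j →
      ∫ x, f i x * f j x ∂μ = if i = j then (c i)^2 else 0 := by
    intro i j hi hj
    have e : (fun x => f i x * f j x) = fun x => (c i * c j) * (φ i x * φ j x) := by
      funext x; simp only [hfdef]; ring
    rw [e, integral_const_mul]
    by_cases hij : i = j
    · subst hij
      have e2 : (fun x => φ i x * φ i x) = fun x => (φ i x)^2 := by
        funext x; rw [sq]
      rw [e2, hnorm i hi]
      simp [sq]
    · rw [horth i j hi hj hij]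
      simp [hij]
  -- block sums
  set blk : ℕ → ℕ → α → ℝ := fun u v x => ∑ i ∈ Finset.Ioc u v, f i x with hblkdef
  have hblkmem : ∀ u v, MemLp (blk u v) 2 μ := by
    intro u v
    show MemLp (fun x => ∑ i ∈ Finset.Ioc u v, f i x) 2 μ
    apply memLp_finset_sum
    intro i hi
    exact hfmem i (by have := (Finset.mem_Ioc.mp hi).1; omega)
  have hblksq_int : ∀ u v, Integrable (fun x => (blk u v x)^2) μ :=
    fun u v => (hblkmem u v).integrable_sq
  have hblk_val : ∀ u v, ∫ x, (blk u v x)^2 ∂μ = ∑ i ∈ Finset.Ioc u v, (c i)^2 := by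
    intro u v
    have hone : ∀ i ∈ Finset.Ioc u v, 1 ≤ i := by
      intro i hi; have := (Finset.mem_Ioc.mp hi).1; omega
    have e : (fun x => (blk u v x)^2)
        = fun x => ∑ i ∈ Finset.Ioc u v, ∑ j ∈ Finset.Ioc u v, f i x * f j x := by
      funext x; rw [sq, hblkdef]; exact Finset.sum_mul_sum _ _ _ _
    rw [e, MeasureTheory.integral_finset_sum _ (fun i hi =>
      integrable_finset_sum _ (fun j hj => hintmul i j (hone i hi) (hone j hj)))]
    refine Finset.sum_congr rfl fun i hi => ?_
    rw [MeasureTheory.integral_finset_sum _ (fun j hj => hintmul i j (hone i hi) (hone j hj))]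
    rw [Finset.sum_congr rfl (fun j hj => hfint i j (hone i hi) (hone j hj))]
    simp [Finset.sum_ite_eq' (Finset.Ioc u v) i, hi]
  -- partial sums
  set s : α → ℕ → ℝ := fun x n => ∑ i ∈ Finset.Ioc 0 n, f i x with hsdef
  have hdiff : ∀ (x : α) (u v : ℕ), u ≤ v → s x v - s x u = blk u v x := by
    intro x u v huv
    have := Finset.sum_Ioc_consecutive (fun i => f i x) (Nat.zero_le u) huv
    simp only [hsdef, hblkdef]
    linarith
  have hQblk : ∀ (x : α) (a k : ℕ), QQ (s x) a k
      = ∑ j ∈ Finset.range (k+1), ∑ m ∈ Finset.range (2^(k-j)),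
          (blk (a + m*2^j) (a + (m+1)*2^j) x)^2 := by
    intro x a k
    unfold QQ
    refine Finset.sum_congr rfl fun j _ => Finset.sum_congr rfl fun m _ => ?_
    have hle : a + m*2^j ≤ a + (m+1)*2^j := by
      have : m*2^j ≤ (m+1)*2^j := Nat.mul_le_mul_right _ (Nat.le_succ m)
      omega
    rw [hdiff x _ _ hle]
  have hQint : ∀ a k, Integrable (fun x => QQ (s x) a k) μ := by
    intro a k
    have e : (fun x => QQ (s x) a k)
        = fun x => ∑ j ∈ Finset.range (k+1), ∑ m ∈ Finset.range (2^(k-j)),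
            (blk (a + m*2^j) (a + (m+1)*2^j) x)^2 := funext fun x => hQblk x a k
    rw [e]
    exact integrable_finset_sum _ fun j _ => integrable_finset_sum _ fun m _ => hblksq_int _ _
  -- partition identity
  have hpart : ∀ (g : ℕ → ℝ) (d a M : ℕ),
      ∑ m ∈ Finset.range M, ∑ i ∈ Finset.Ioc (a + m*d) (a + (m+1)*d), g i
      = ∑ i ∈ Finset.Ioc a (a + M*d), g i := by
    intro g d a M
    induction M with
    | zero => simp
    | succ M ihM =>
      have hle1 : a ≤ a + M*d := Nat.le_add_right a (M*d)
      have hle2 : a + M*d ≤ a + (M+1)*d := by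
        have : M*d ≤ (M+1)*d := Nat.mul_le_mul_right d (Nat.le_succ M)
        omega
      rw [Finset.sum_range_succ, ihM, Finset.sum_Ioc_consecutive _ hle1 hle2]
  have hQval : ∀ a k, ∫ x, QQ (s x) a k ∂μ
      = ((k:ℝ)+1) * ∑ i ∈ Finset.Ioc a (a + 2^k), (c i)^2 := by
    intro a k
    have e : (fun x => QQ (s x) a k)
        = fun x => ∑ j ∈ Finset.range (k+1), ∑ m ∈ Finset.range (2^(k-j)),
            (blk (a + m*2^j) (a + (m+1)*2^j) x)^2 := funext fun x => hQblk x a k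
    rw [e, MeasureTheory.integral_finset_sum _
      (fun j _ => integrable_finset_sum _ fun m _ => hblksq_int _ _)]
    have e2 : ∀ j ∈ Finset.range (k+1),
        ∫ x, ∑ m ∈ Finset.range (2^(k-j)), (blk (a + m*2^j) (a + (m+1)*2^j) x)^2 ∂μ
        = ∑ i ∈ Finset.Ioc a (a + 2^k), (c i)^2 := by
      intro j hj
      have hj' : j ≤ k := Nat.lt_succ_iff.mp (Finset.mem_range.mp hj)
      rw [MeasureTheory.integral_finset_sum _ (fun m _ => hblksq_int _ _)]
      rw [Finset.sum_congr rfl (fun m _ => hblk_val _ _)]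
      rw [hpart (fun i => (c i)^2) (2^j) a (2^(k-j))]
      have hexp : k - j + j = k := by omega
      have he : (2:ℕ)^(k-j) * 2^j = 2^k := by rw [← pow_add, hexp]
      rw [he]
    rw [Finset.sum_congr rfl e2, Finset.sum_const, Finset.card_range, nsmul_eq_mul]
    push_cast; ring
  -- the block sums of c² and of c² log²
  set V : ℕ → ℝ := fun K => ∑ i ∈ Finset.Ioc (2^(K+1)) (2^(K+2)), (c i)^2 with hVdef
  set w : ℕ → ℝ := fun K => ∑ i ∈ Finset.Ioc (2^(K+1)) (2^(K+2)),
    (c i ^ 2 * Real.log i ^ 2) with hwdef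
  have hVnn : ∀ K : ℕ, 0 ≤ V K := fun K => Finset.sum_nonneg fun i _ => sq_nonneg _
  have hdnn : ∀ i : ℕ, 0 ≤ c i ^ 2 * Real.log (i:ℝ) ^ 2 :=
    fun i => mul_nonneg (sq_nonneg _) (sq_nonneg _)
  have hwsum : Summable w := by
    apply summable_of_sum_range_le (c := ∑' i, (c i ^ 2 * Real.log i ^ 2))
      (fun K => Finset.sum_nonneg fun i _ => hdnn i)
    intro N
    have htel : ∑ K ∈ Finset.range N, w K
        = ∑ i ∈ Finset.Ioc (2^1) (2^(N+1)), (c i ^ 2 * Real.log i ^ 2) := by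
      induction N with
      | zero => simp
      | succ N ihN =>
        rw [Finset.sum_range_succ, ihN, hwdef,
          Finset.sum_Ioc_consecutive _ (Nat.pow_le_pow_right (by norm_num) (by omega))
            (Nat.pow_le_pow_right (by norm_num) (by omega))]
    rw [htel]
    exact Summable.sum_le_tsum _ (fun i _ => hdnn i) hc
  have hlog2 : (0:ℝ) < Real.log 2 := Real.log_pos one_lt_two
  have hVle : ∀ K : ℕ, ((K:ℝ)+1)^2 * Real.log 2 ^ 2 * V K ≤ w K := by
    intro K
    rw [hVdef, hwdef, Finset.mul_sum]
    apply Finset.sum_le_sum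
    intro i hi
    obtain ⟨hi1, _⟩ := Finset.mem_Ioc.mp hi
    have hcast : ((2:ℝ))^(K+1) ≤ (i:ℝ) := by
      have : (2:ℕ)^(K+1) ≤ i := le_of_lt hi1
      exact_mod_cast this
    have hlog : ((K:ℝ)+1) * Real.log 2 ≤ Real.log i := by
      calc ((K:ℝ)+1) * Real.log 2 = Real.log ((2:ℝ)^(K+1 : ℕ)) := by
            rw [Real.log_pow]; push_cast; ring
        _ ≤ Real.log i := by
            have hipos : (0:ℝ) < (i:ℝ) := lt_of_lt_of_le (by positivity) hcast
            exact (Real.log_le_log_iff (by positivity) hipos).mpr hcast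
    have hlognn : 0 ≤ ((K:ℝ)+1) * Real.log 2 := by positivity
    have hsq : (((K:ℝ)+1) * Real.log 2)^2 ≤ Real.log i ^ 2 := by
      apply pow_le_pow_left₀ hlognn hlog
    nlinarith [sq_nonneg (c i)]
  have hGsum : Summable (fun K : ℕ => ((K:ℝ)+2)^2 * V K) := by
    refine Summable.of_nonneg_of_le
      (fun K => mul_nonneg (by positivity) (hVnn K))
      (fun K => ?_) (hwsum.mul_left (4 / Real.log 2 ^ 2))
    rw [div_mul_eq_mul_div, le_div_iff₀ (by positivity)]
    have h1 : ((K:ℝ)+2)^2 * V K ≤ 4*((K:ℝ)+1)^2 * V K := by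
      nlinarith [mul_nonneg (mul_nonneg (Nat.cast_nonneg (α := ℝ) K) (Nat.cast_nonneg (α := ℝ) K)) (hVnn K),
        mul_nonneg (Nat.cast_nonneg (α := ℝ) K) (hVnn K)]
    nlinarith [hVle K, hVnn K]
  -- the two a.e.-summable families
  set G : ℕ → α → ℝ := fun K x => ((K:ℝ)+2) * QQ (s x) (2^(K+1)) (K+1) with hGdef
  have hGnn : ∀ (K : ℕ) x, 0 ≤ G K x :=
    fun K x => mul_nonneg (by positivity) (QQ_nonneg _ _ _)
  have hGint : ∀ K, Integrable (G K) μ := fun K => (hQint _ _).const_mul _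
  have hGval : ∀ K : ℕ, ∫ x, G K x ∂μ = ((K:ℝ)+2)^2 * V K := by
    intro K
    rw [hGdef]
    simp only
    rw [integral_const_mul, hQval]
    have e : (2:ℕ)^(K+1) + 2^(K+1) = 2^(K+2) := by rw [pow_succ 2 (K+1)]; ring
    rw [e]
    push_cast
    ring
  have hGae : ∀ᵐ x ∂μ, Summable fun K => G K x := by
    apply ae_summable μ G hGnn hGint
    have e : (fun K : ℕ => ∫ x, G K x ∂μ) = fun K : ℕ => ((K:ℝ)+2)^2 * V K := funext hGval
    rw [e]; exact hGsum
  set H : ℕ → α → ℝ := fun K x => ((K:ℝ)+1)^2 * (blk (2^(K+1)) (2^(K+2)) x)^2 with hHdef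
  have hHnn : ∀ (K : ℕ) x, 0 ≤ H K x := fun K x => mul_nonneg (by positivity) (sq_nonneg _)
  have hHint : ∀ K, Integrable (H K) μ := fun K => (hblksq_int _ _).const_mul _
  have hHval : ∀ K : ℕ, ∫ x, H K x ∂μ = ((K:ℝ)+1)^2 * V K := by
    intro K
    rw [hHdef]
    simp only
    rw [integral_const_mul, hblk_val]
  have hHae : ∀ᵐ x ∂μ, Summable fun K => H K x := by
    apply ae_summable μ H hHnn hHint
    have e : (fun K : ℕ => ∫ x, H K x ∂μ) = fun K : ℕ => ((K:ℝ)+1)^2 * V K := funext hHval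
    rw [e]
    apply Summable.of_nonneg_of_le (fun K => mul_nonneg (by positivity) (hVnn K))
      (fun K => ?_) hGsum
    have : ((K:ℝ)+1)^2 ≤ ((K:ℝ)+2)^2 := by nlinarith [Nat.cast_nonneg (α := ℝ) K]
    exact mul_le_mul_of_nonneg_right this (hVnn K)
  -- main a.e. argument
  filter_upwards [hGae, hHae] with x hGx hHx
  have hQ0 : Filter.Tendsto (fun K => G K x) Filter.atTop (nhds 0) :=
    hGx.tendsto_atTop_zero
  -- summability of the dyadic increments
  have hinv : Summable (fun K : ℕ => (1:ℝ) / ((K:ℝ)+1)^2) := by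
    have h := Real.summable_one_div_nat_pow.mpr (by norm_num : 1 < 2)
    have h2 := (summable_nat_add_iff 1).mpr h
    convert h2 using 2 with K
    · rfl
    push_cast
    ring
  have hDabs : Summable (fun K => |blk (2^(K+1)) (2^(K+2)) x|) := by
    refine Summable.of_nonneg_of_le (fun K => abs_nonneg _)
      (fun K => ?_) ((hHx.add hinv).div_const 2)
    have ht : (0:ℝ) < ((K:ℝ)+1)^2 := by positivity
    set b := |blk (2^(K+1)) (2^(K+2)) x| with hb
    have hbnn : 0 ≤ b := abs_nonneg _
    have h0 := sq_nonneg (((K:ℝ)+1)^2 * b - 1)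
    have h1 : (1/((K:ℝ)+1)^2) * ((K:ℝ)+1)^2 = 1 := by field_simp
    have key0 : (2 * b) * ((K:ℝ)+1)^2
        ≤ (((K:ℝ)+1)^2 * b^2 + 1/((K:ℝ)+1)^2) * ((K:ℝ)+1)^2 := by nlinarith [h0]
    have key1 : 2 * b ≤ ((K:ℝ)+1)^2 * b^2 + 1/((K:ℝ)+1)^2 :=
      le_of_mul_le_mul_right key0 ht
    have hHb : H K x = ((K:ℝ)+1)^2 * b^2 := by
      rw [hHdef]; simp only; rw [hb, sq_abs]
    rw [le_div_iff₀ (by norm_num : (0:ℝ) < 2), hHb]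
    linarith [key1]
  have hDsum : Summable (fun K => blk (2^(K+1)) (2^(K+2)) x) := hDabs.of_abs
  -- the dyadic partial sums converge
  have hpartial : ∀ K, s x (2^(K+1))
      = s x 2 + ∑ k ∈ Finset.range K, blk (2^(k+1)) (2^(k+2)) x := by
    intro K
    induction K with
    | zero => simp
    | succ K ihK =>
      show s x (2^(K+2)) = _
      rw [Finset.sum_range_succ, ← add_assoc, ← ihK]
      have h2 := hdiff x (2^(K+1)) (2^(K+2)) (Nat.pow_le_pow_right (by norm_num) (by omega))
      linarith
  set L : ℝ := s x 2 + ∑' k, blk (2^(k+1)) (2^(k+2)) x with hLdef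
  have hdyadic : Filter.Tendsto (fun K => s x (2^(K+1))) Filter.atTop (nhds L) := by
    have e : (fun K => s x (2^(K+1)))
        = fun K => s x 2 + ∑ k ∈ Finset.range K, blk (2^(k+1)) (2^(k+2)) x :=
      funext hpartial
    rw [e, hLdef]
    exact tendsto_const_nhds.add hDsum.hasSum.tendsto_sum_nat
  refine ⟨L, ?_⟩
  have hIcc : ∀ n, ∑ i ∈ Finset.Icc 1 n, c i * φ i x = s x n := by
    intro n
    have he : Finset.Icc 1 n = Finset.Ioc 0 n := by
      ext i; simp only [Finset.mem_Icc, Finset.mem_Ioc]; omega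
    rw [he]
  simp only [hIcc]
  rw [Metric.tendsto_atTop]
  intro ε hε
  obtain ⟨K1, hK1⟩ := Metric.tendsto_atTop.mp hdyadic (ε/2) (by positivity)
  obtain ⟨K2, hK2⟩ := Metric.tendsto_atTop.mp hQ0 ((ε/2)^2) (by positivity)
  refine ⟨2^(max K1 K2 + 1), fun n hn => ?_⟩
  have hn0 : n ≠ 0 := by
    have : 0 < 2^(max K1 K2 + 1) := Nat.pow_pos (by norm_num)
    omega
  have hlogge : max K1 K2 + 1 ≤ Nat.log 2 n :=
    (Nat.le_log_iff_pow_le one_lt_two hn0).mpr hn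
  set K := Nat.log 2 n - 1 with hKdef
  have hKeq : K + 1 = Nat.log 2 n := by omega
  have hKmax : max K1 K2 ≤ K := by omega
  have hlow : 2^(K+1) ≤ n := by rw [hKeq]; exact Nat.pow_log_le_self 2 hn0
  have hhigh : n ≤ 2^(K+1) + 2^(K+1) := by
    have h := Nat.lt_pow_succ_log_self one_lt_two n
    rw [← hKeq] at h
    have e : 2^(K+1+1) = 2^(K+1) + 2^(K+1) := by rw [pow_succ]; ring
    omega
  have hkey := key (s x) (K+1) (2^(K+1)) n hlow (by omega)
  have hq := hK2 K (le_trans (le_max_right _ _) hKmax)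
  have hqval : G K x = ((K:ℝ)+2) * QQ (s x) (2^(K+1)) (K+1) := rfl
  rw [Real.dist_eq, sub_zero] at hq
  have hGKnn : 0 ≤ G K x := hGnn K x
  have hsq : (s x n - s x (2^(K+1)))^2 < (ε/2)^2 := by
    have h1 : ((K:ℝ)+1+1) * QQ (s x) (2^(K+1)) (K+1) = G K x := by
      rw [hqval]; ring
    have h2 : (((K+1 : ℕ):ℝ)+1) = ((K:ℝ)+1+1) := by push_cast; ring
    rw [h2, h1] at hkey
    calc (s x n - s x (2^(K+1)))^2 ≤ G K x := hkey
      _ = |G K x| := (abs_of_nonneg hGKnn).symm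
      _ < (ε/2)^2 := hq
  have habs : |s x n - s x (2^(K+1))| < ε/2 := abs_lt_of_sq_lt_sq hsq (by positivity)
  have hdy := hK1 K (le_trans (le_max_left _ _) hKmax)
  rw [Real.dist_eq] at hdy ⊢
  calc |s x n - L| ≤ |s x n - s x (2^(K+1))| + |s x (2^(K+1)) - L| := abs_sub_le _ _ _
    _ < ε/2 + ε/2 := add_lt_add habs hdy
    _ = ε := by ring
end

section
/- Let (μ_n)_{n≥0} be a normal sequence with conjugate weights (α_n)_{n≥0} (i.e. α_0 = 1 and μ_n = α_n / ∑_{k=0}^n α_k for n ≥ 1). Let (X_n)_{n≥1} be square-integrable random variables and set X̄_n = (∑_{i=0}^{n−1} α_i (X_{i+1} − E X_{i+1})) / (∑_{i=0}^{n−1} α_i). If both series ∑_{n≥0} μ_n² Var(X_{n+1}) and ∑_{n≥0} μ_n √(Var(X_{n+1}) · Var(X̄_n)) converge, then X̄_n → 0 almost surely; that is, (X_n) satisfies the generalized strong law of large numbers with weights (α_n). -/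
open Filter Finset MeasureTheory ProbabilityTheory



/-- Elementary AM-GM based bound yielding Cauchy-Schwarz. -/
lemma aux_amgm {A B I : ℝ} (hA : 0 ≤ A) (hB : 0 ≤ B) (hI : 0 ≤ I)
    (h : ∀ s : ℝ, 0 < s → 2 * I ≤ s * A + B / s) : I ≤ Real.sqrt A * Real.sqrt B := by
  rcases eq_or_lt_of_le hA with hA0 | hApos
  · -- A = 0 case: show I ≤ 0
    have hI0 : 2 * I ≤ 0 := by
      refine le_of_forall_pos_le_add fun ε hε => ?_
      have hs : (0:ℝ) < B / ε + 1 := by positivity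
      have h2 := h _ hs
      rw [← hA0] at h2
      have heq : ε * (B / ε + 1) = B + ε := by field_simp
      have : B / (B / ε + 1) ≤ ε := by
        rw [div_le_iff₀ hs]
        nlinarith [heq]
      linarith
    have : I ≤ 0 := by linarith
    nlinarith [Real.sqrt_nonneg A, Real.sqrt_nonneg B]
  · -- A > 0
    have hsA : 0 < Real.sqrt A := Real.sqrt_pos.2 hApos
    have hAs : Real.sqrt A * Real.sqrt A = A := Real.mul_self_sqrt hA
    have key : ∀ ε : ℝ, 0 < ε → 2 * I ≤ 2 * (Real.sqrt A * Real.sqrt B) + ε := by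
      intro ε hε
      set s : ℝ := (Real.sqrt B + ε / Real.sqrt A) / Real.sqrt A with hs_def
      have hsB : 0 ≤ Real.sqrt B := Real.sqrt_nonneg B
      have hspos : 0 < s := by positivity
      have h2 := h s hspos
      have hsA' : s * A = Real.sqrt A * Real.sqrt B + ε := by
        rw [hs_def]; field_simp; nlinarith [hAs]
      have hBB : Real.sqrt B * Real.sqrt B = B := Real.mul_self_sqrt hB
      have hB' : B ≤ Real.sqrt B * (Real.sqrt B + ε / Real.sqrt A) := by
        have : 0 ≤ ε / Real.sqrt A := by positivity
        nlinarith
      have hBs : B / s ≤ Real.sqrt A * Real.sqrt B := by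
        rw [hs_def, div_div_eq_mul_div, div_le_iff₀ (by positivity)]
        nlinarith [mul_le_mul_of_nonneg_left hB' hsA.le]
      linarith
    have : 2 * I ≤ 2 * (Real.sqrt A * Real.sqrt B) :=
      le_of_forall_pos_le_add key
    linarith

/-- Cauchy-Schwarz for integrals, elementary form. -/
lemma integral_abs_mul_le {α : Type*} {m : MeasurableSpace α} {μ : Measure α}
    {f g : α → ℝ} (hf : MemLp f 2 μ) (hg : MemLp g 2 μ) :
    ∫ x, |f x * g x| ∂μ ≤
      Real.sqrt (∫ x, f x ^ 2 ∂μ) * Real.sqrt (∫ x, g x ^ 2 ∂μ) := by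
  have hfg : Integrable (fun x => f x * g x) μ := by
    have h := (hg.smul hf (p := 2) (q := 2) (r := 1) (hpqr := ⟨by rw [inv_one, ENNReal.inv_two_add_inv_two]⟩))
    rw [memLp_one_iff_integrable] at h
    exact h
  have hf2 := hf.integrable_sq
  have hg2 := hg.integrable_sq
  refine aux_amgm (integral_nonneg fun x => sq_nonneg _) (integral_nonneg fun x => sq_nonneg _)
    (integral_nonneg fun x => abs_nonneg _) fun s hs => ?_
  have hpt : ∀ x, 2 * |f x * g x| ≤ s * f x ^ 2 + g x ^ 2 / s := by
    intro x
    have h1 : 2 * (Real.sqrt s * |f x|) * (|g x| / Real.sqrt s) ≤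
        (Real.sqrt s * |f x|) ^ 2 + (|g x| / Real.sqrt s) ^ 2 := two_mul_le_add_sq _ _
    have hss : Real.sqrt s * Real.sqrt s = s := Real.mul_self_sqrt hs.le
    have hspos : 0 < Real.sqrt s := Real.sqrt_pos.2 hs
    have e1 : 2 * (Real.sqrt s * |f x|) * (|g x| / Real.sqrt s) = 2 * |f x * g x| := by
      rw [abs_mul]; field_simp
    have e2 : (Real.sqrt s * |f x|) ^ 2 = s * f x ^ 2 := by
      rw [mul_pow, sq_abs, sq, hss]
    have e3 : (|g x| / Real.sqrt s) ^ 2 = g x ^ 2 / s := by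
      rw [div_pow, sq_abs, Real.sq_sqrt hs.le]
    rw [e1, e2, e3] at h1
    exact h1
  calc 2 * ∫ x, |f x * g x| ∂μ = ∫ x, 2 * |f x * g x| ∂μ := (integral_const_mul _ _).symm
    _ ≤ ∫ x, (s * f x ^ 2 + g x ^ 2 / s) ∂μ := by
        refine integral_mono (hfg.abs.const_mul 2) ((hf2.const_mul s).add (hg2.div_const s)) hpt
    _ = s * ∫ x, f x ^ 2 ∂μ + (∫ x, g x ^ 2 ∂μ) / s := by
        rw [integral_add ((hf2.const_mul s)) (hg2.div_const s), integral_const_mul, integral_div]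


lemma ae_summable_of_summable_integral {α : Type*} {m : MeasurableSpace α} {μ : Measure α}
    {f : ℕ → α → ℝ} (hf : ∀ n, Integrable (f n) μ) (hnn : ∀ n x, 0 ≤ f n x)
    (hs : Summable fun n => ∫ x, f n x ∂μ) : ∀ᵐ x ∂μ, Summable fun n => f n x := by
  have hmeas : ∀ n, AEMeasurable (fun x => ENNReal.ofReal (f n x)) μ :=
    fun n => ENNReal.measurable_ofReal.comp_aemeasurable (hf n).aemeasurable
  have hlint : ∀ n, ∫⁻ x, ENNReal.ofReal (f n x) ∂μ = ENNReal.ofReal (∫ x, f n x ∂μ) :=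
    fun n => (ofReal_integral_eq_lintegral_ofReal (hf n) (ae_of_all _ (hnn n))).symm
  have hfin : ∫⁻ x, ∑' n, ENNReal.ofReal (f n x) ∂μ < ⊤ := by
    rw [lintegral_tsum hmeas]
    simp_rw [hlint]
    rw [← ENNReal.ofReal_tsum_of_nonneg (fun n => integral_nonneg (hnn n)) hs]
    exact ENNReal.ofReal_lt_top
  have hae := ae_lt_top' (AEMeasurable.ennreal_tsum hmeas) hfin.ne
  filter_upwards [hae] with x hx
  have := ENNReal.summable_toReal hx.ne
  refine this.congr fun n => ?_
  rw [ENNReal.toReal_ofReal (hnn n x)]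

lemma det_tendsto (q e t : ℕ → ℝ)
    (hq0 : ∀ n, 0 ≤ q n) (hq1 : ∀ n, q n ≤ 1)
    (ht0 : ∀ n, 0 ≤ t n) (he0 : ∀ n, 0 ≤ e n)
    (hrec : ∀ n, t (n + 1) ≤ (1 - q n) * t n + e n)
    (hdiv : Tendsto (fun n => ∑ i ∈ range n, q i) atTop atTop)
    (hsum : Summable e) : Tendsto t atTop (nhds 0) := by
  set S : ℕ → ℝ := fun n => ∑ i ∈ range n, q i with hS
  have key : ∀ m n, m ≤ n →
      t n ≤ Real.exp (S m - S n) * t m + ∑ k ∈ Finset.Ico m n, e k := by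
    intro m n hmn
    induction n, hmn using Nat.le_induction with
    | base => simp
    | succ n hmn ih =>
      have h1 : (1 : ℝ) - q n ≤ Real.exp (-q n) := by
        have := Real.add_one_le_exp (-q n); linarith
      have hexp : 0 < Real.exp (-q n) := Real.exp_pos _
      have hexple : Real.exp (-q n) ≤ 1 :=
        Real.exp_le_one_iff.2 (by linarith [hq0 n])
      have hIco : (0:ℝ) ≤ ∑ k ∈ Finset.Ico m n, e k :=
        Finset.sum_nonneg fun k _ => he0 k
      have hSn : S (n + 1) = S n + q n := by
        simp [hS, Finset.sum_range_succ]
      calc t (n + 1) ≤ (1 - q n) * t n + e n := hrec n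
        _ ≤ Real.exp (-q n) * t n + e n := by
            have := mul_le_mul_of_nonneg_right h1 (ht0 n); linarith
        _ ≤ Real.exp (-q n) * (Real.exp (S m - S n) * t m + ∑ k ∈ Finset.Ico m n, e k) + e n := by
            have := mul_le_mul_of_nonneg_left ih hexp.le; linarith
        _ = Real.exp (S m - S (n + 1)) * t m +
              Real.exp (-q n) * ∑ k ∈ Finset.Ico m n, e k + e n := by
            rw [hSn, show S m - (S n + q n) = -q n + (S m - S n) by ring, Real.exp_add]; ring
        _ ≤ Real.exp (S m - S (n + 1)) * t m + ∑ k ∈ Finset.Ico m n, e k + e n := by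
            have := mul_le_mul_of_nonneg_right hexple hIco; linarith
        _ = Real.exp (S m - S (n + 1)) * t m + ∑ k ∈ Finset.Ico m (n + 1), e k := by
            rw [Finset.sum_Ico_succ_top hmn]; ring
  rw [Metric.tendsto_atTop]
  intro ε hε
  -- choose m with small tail
  have htail : Tendsto (fun m => (∑' n, e n) - ∑ i ∈ range m, e i) atTop (nhds 0) := by
    have := hsum.hasSum.tendsto_sum_nat
    simpa using (tendsto_const_nhds (x := ∑' n, e n)).sub this
  obtain ⟨m, hm⟩ := (htail.eventually (gt_mem_nhds (half_pos hε))).exists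
  -- choose N with exp term small
  have h2 : Tendsto (fun n => Real.exp (S m - S n) * t m) atTop (nhds 0) := by
    have h3 : Tendsto (fun n => Real.exp (S m - S n)) atTop (nhds 0) := by
      have : Tendsto (fun n => S n - S m) atTop atTop := tendsto_atTop_add_const_right _ _ hdiv
      have := Real.tendsto_exp_neg_atTop_nhds_zero.comp this
      refine this.congr fun n => ?_
      simp [neg_sub]
    simpa using h3.mul_const (t m)
  have h4 : ∀ᶠ n in atTop, Real.exp (S m - S n) * t m < ε / 2 :=
    h2.eventually (gt_mem_nhds (half_pos hε))
  obtain ⟨N, hN⟩ := (h4.and (eventually_ge_atTop m)).exists_forall_of_atTop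
  refine ⟨N, fun n hn => ?_⟩
  obtain ⟨hexp, hmn⟩ := hN n hn
  have hkey := key m n hmn
  have hIco : ∑ k ∈ Finset.Ico m n, e k ≤ (∑' k, e k) - ∑ i ∈ range m, e i := by
    rw [Finset.sum_Ico_eq_sub _ hmn]
    have := Summable.sum_le_tsum (range n) (fun k _ => he0 k) hsum
    linarith
  rw [Real.dist_eq, sub_zero, abs_of_nonneg (ht0 n)]
  calc t n ≤ Real.exp (S m - S n) * t m + ∑ k ∈ Finset.Ico m n, e k := hkey
    _ < ε / 2 + ε / 2 := by
        have : ∑ k ∈ Finset.Ico m n, e k < ε / 2 := lt_of_le_of_lt hIco hm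
        linarith
    _ = ε := by ring

/-- Let `(μ_n)` be a normal sequence with conjugate weights `(α_n)`
(`α_0 = 1`, `μ_n = α_n / ∑_{k≤n} α_k`).  For square-integrable random variables `(X_n)` set
`X̄_n = (∑_{i=0}^{n−1} α_i (X_{i+1} − E X_{i+1})) / (∑_{i=0}^{n−1} α_i)`.  If both series
`∑ μ_n² Var(X_{n+1})` and `∑ μ_n √(Var(X_{n+1}) Var(X̄_n))` converge, then `X̄_n → 0`
almost surely. -/
theorem stmt_14 {Ω : Type*} {m0 : MeasurableSpace Ω} (P : Measure Ω) [IsProbabilityMeasure P]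
    (μs a : ℕ → ℝ) (hμs : NormalSeq μs)
    (ha0 : a 0 = 1) (hconj : ∀ n, μs n = a n / ∑ k ∈ Finset.range (n + 1), a k)
    (X : ℕ → Ω → ℝ) (hL2 : ∀ n, MemLp (X n) 2 P)
    (Xbar : ℕ → Ω → ℝ)
    (hXbar : ∀ n ω, Xbar n ω =
      (∑ i ∈ Finset.range n, a i * (X (i + 1) ω - ∫ ω', X (i + 1) ω' ∂P)) /
        ∑ i ∈ Finset.range n, a i)
    (hser1 : Summable fun n => μs n ^ 2 * variance (X (n + 1)) P)
    (hser2 : Summable fun n =>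
      μs n * Real.sqrt (variance (X (n + 1)) P * variance (Xbar n) P)) :
    ∀ᵐ ω ∂P, Filter.Tendsto (fun n => Xbar n ω) Filter.atTop (nhds 0) := by
  obtain ⟨hμ0, hμIoo, hμdiv, -⟩ := hμs
  have hμnn : ∀ n, 0 ≤ μs n := by
    intro n
    rcases Nat.eq_zero_or_pos n with h | h
    · simp [h, hμ0]
    · exact (hμIoo n h).1.le
  have hμle1 : ∀ n, μs n ≤ 1 := by
    intro n
    rcases Nat.eq_zero_or_pos n with h | h
    · simp [h, hμ0]
    · exact (hμIoo n h).2.le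
  set b : ℕ → ℝ := fun n => ∑ i ∈ Finset.range n, a i with hb
  have hbsucc : ∀ n, b (n + 1) = b n + a n := fun n => Finset.sum_range_succ a n
  have hb1 : b 1 = 1 := by simp [hb, ha0]
  have hconj' : ∀ n, μs n = a n / b (n + 1) := hconj
  have hbpos : ∀ n, 0 < b (n + 1) := by
    intro n
    induction n with
    | zero => rw [hb1]; norm_num
    | succ n ih =>
      have hμ := hμIoo (n + 1) (by omega)
      have hc := hconj' (n + 1)
      have hne : b (n + 2) ≠ 0 := by
        intro h0
        have h1 := hμ.1
        rw [hc, h0, div_zero] at h1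
        exact lt_irrefl _ h1
      have ha' : a (n + 1) = μs (n + 1) * b (n + 2) := by
        rw [hc]; field_simp
      have hb' : (1 - μs (n + 1)) * b (n + 2) = b (n + 1) := by
        have h2 := hbsucc (n + 1)
        rw [ha'] at h2
        linarith
      nlinarith [hμ.2, ih]
  have haeq : ∀ n, a n = μs n * b (n + 1) := by
    intro n
    rw [hconj' n]
    field_simp [(hbpos n).ne']
  have hbeq : ∀ n, b n = (1 - μs n) * b (n + 1) := by
    intro n
    have h2 := hbsucc n
    rw [haeq n] at h2
    linarith
  set Y : ℕ → Ω → ℝ := fun m ω => X m ω - ∫ ω', X m ω' ∂P with hY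
  have hYmem : ∀ m, MemLp (Y m) 2 P := fun m => (hL2 m).sub (memLp_const _)
  have hYint : ∀ m, Integrable (Y m) P := fun m => (hYmem m).integrable one_le_two
  have hXint : ∀ m, Integrable (X m) P := fun m => (hL2 m).integrable one_le_two
  have hYmean : ∀ m, ∫ ω, Y m ω ∂P = 0 := by
    intro m
    rw [hY]
    rw [integral_sub (hXint m) (integrable_const _), integral_const]
    simp
  have hYvar : ∀ m, ∫ ω, Y m ω ^ 2 ∂P = variance (X m) P := by
    intro m
    rw [variance_eq_integral (hL2 m).aestronglyMeasurable.aemeasurable]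
  have hXbar' : ∀ n ω, Xbar n ω = (∑ i ∈ Finset.range n, a i * Y (i + 1) ω) / b n := hXbar
  have hXbarFun : ∀ n, Xbar n = fun ω => (∑ i ∈ Finset.range n, a i * Y (i + 1) ω) / b n :=
    fun n => funext (hXbar' n)
  have hXbarMem : ∀ n, MemLp (Xbar n) 2 P := by
    intro n
    rw [hXbarFun n]
    have hsum : MemLp (fun ω => ∑ i ∈ Finset.range n, a i * Y (i + 1) ω) 2 P :=
      memLp_finset_sum _ fun i _ => (hYmem (i + 1)).const_mul (a i)
    simp_rw [div_eq_inv_mul]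
    exact hsum.const_mul _
  have hXbarMean : ∀ n, ∫ ω, Xbar n ω ∂P = 0 := by
    intro n
    rw [hXbarFun n, integral_div]
    rw [integral_finset_sum _ fun i _ => (hYint (i + 1)).const_mul (a i)]
    simp_rw [integral_const_mul]
    simp [hYmean]
  have hVarXbar : ∀ n, variance (Xbar n) P = ∫ ω, Xbar n ω ^ 2 ∂P := by
    intro n
    rw [variance_of_integral_eq_zero (hXbarMem n).aestronglyMeasurable.aemeasurable (hXbarMean n)]
  have hrecX : ∀ n ω, Xbar (n + 1) ω = (1 - μs n) * Xbar n ω + μs n * Y (n + 1) ω := by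
    intro n ω
    have hnum : ∑ i ∈ Finset.range n, a i * Y (i + 1) ω = b n * Xbar n ω := by
      rcases Nat.eq_zero_or_pos n with h | h
      · subst h; simp [hb]
      · obtain ⟨k, rfl⟩ := Nat.exists_eq_succ_of_ne_zero h.ne'
        rw [hXbar' (k + 1) ω]
        field_simp [(hbpos k).ne']
    rw [hXbar' (n + 1) ω, Finset.sum_range_succ, hnum, haeq n, hbeq n]
    field_simp [(hbpos n).ne']
  set E : ℕ → Ω → ℝ := fun n ω => |Xbar (n + 1) ω ^ 2 - (1 - μs n) ^ 2 * Xbar n ω ^ 2| with hE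
  have hmul : ∀ n, Integrable (fun ω => Xbar n ω * Y (n + 1) ω) P := by
    intro n
    have h := (hYmem (n + 1)).smul (hXbarMem n) (p := 2) (q := 2) (r := 1)
      (hpqr := ⟨by rw [inv_one, ENNReal.inv_two_add_inv_two]⟩)
    rw [memLp_one_iff_integrable] at h
    exact h
  have hEint : ∀ n, Integrable (E n) P := fun n =>
    ((hXbarMem (n + 1)).integrable_sq.sub ((hXbarMem n).integrable_sq.const_mul _)).abs
  have hEpt : ∀ n ω, E n ω ≤
      2 * μs n * |Xbar n ω * Y (n + 1) ω| + μs n ^ 2 * Y (n + 1) ω ^ 2 := by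
    intro n ω
    have hid : Xbar (n + 1) ω ^ 2 - (1 - μs n) ^ 2 * Xbar n ω ^ 2 =
        2 * ((1 - μs n) * μs n) * (Xbar n ω * Y (n + 1) ω) + μs n ^ 2 * Y (n + 1) ω ^ 2 := by
      rw [hrecX n ω]; ring
    have hcnn : (0:ℝ) ≤ 2 * ((1 - μs n) * μs n) := by
      have := mul_nonneg (sub_nonneg.2 (hμle1 n)) (hμnn n); linarith
    calc E n ω = |2 * ((1 - μs n) * μs n) * (Xbar n ω * Y (n + 1) ω) +
          μs n ^ 2 * Y (n + 1) ω ^ 2| := by rw [hE]; simp only []; rw [hid]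
      _ ≤ |2 * ((1 - μs n) * μs n) * (Xbar n ω * Y (n + 1) ω)| +
          |μs n ^ 2 * Y (n + 1) ω ^ 2| := abs_add_le _ _
      _ = 2 * ((1 - μs n) * μs n) * |Xbar n ω * Y (n + 1) ω| +
          μs n ^ 2 * Y (n + 1) ω ^ 2 := by
            rw [abs_mul (2 * ((1 - μs n) * μs n)) (Xbar n ω * Y (n + 1) ω),
              abs_of_nonneg hcnn,
              abs_of_nonneg (show (0:ℝ) ≤ μs n ^ 2 * Y (n + 1) ω ^ 2 by positivity)]
      _ ≤ 2 * μs n * |Xbar n ω * Y (n + 1) ω| + μs n ^ 2 * Y (n + 1) ω ^ 2 := by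
            have habs : (0:ℝ) ≤ |Xbar n ω * Y (n + 1) ω| := abs_nonneg _
            nlinarith [hμnn n, hμle1 n]
  have hEbound : ∀ n, ∫ ω, E n ω ∂P ≤
      2 * (μs n * Real.sqrt (variance (X (n + 1)) P * variance (Xbar n) P)) +
        μs n ^ 2 * variance (X (n + 1)) P := by
    intro n
    have hint2 : Integrable
        (fun ω => 2 * μs n * |Xbar n ω * Y (n + 1) ω| + μs n ^ 2 * Y (n + 1) ω ^ 2) P :=
      ((hmul n).abs.const_mul _).add ((hYmem (n + 1)).integrable_sq.const_mul _)
    have h1 : ∫ ω, E n ω ∂P ≤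
        ∫ ω, (2 * μs n * |Xbar n ω * Y (n + 1) ω| + μs n ^ 2 * Y (n + 1) ω ^ 2) ∂P :=
      integral_mono (hEint n) hint2 (hEpt n)
    have h2 : ∫ ω, (2 * μs n * |Xbar n ω * Y (n + 1) ω| + μs n ^ 2 * Y (n + 1) ω ^ 2) ∂P =
        2 * μs n * ∫ ω, |Xbar n ω * Y (n + 1) ω| ∂P +
          μs n ^ 2 * ∫ ω, Y (n + 1) ω ^ 2 ∂P := by
      rw [integral_add ((hmul n).abs.const_mul _) ((hYmem (n + 1)).integrable_sq.const_mul _),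
        integral_const_mul, integral_const_mul]
    have hCS := integral_abs_mul_le (hXbarMem n) (hYmem (n + 1))
    have hsqrt : Real.sqrt (variance (X (n + 1)) P * variance (Xbar n) P) =
        Real.sqrt (∫ ω, Xbar n ω ^ 2 ∂P) * Real.sqrt (∫ ω, Y (n + 1) ω ^ 2 ∂P) := by
      rw [hVarXbar n, ← hYvar (n + 1),
        Real.sqrt_mul (integral_nonneg fun ω => sq_nonneg _), mul_comm]
    have h3 : 2 * μs n * ∫ ω, |Xbar n ω * Y (n + 1) ω| ∂P ≤
        2 * (μs n * Real.sqrt (variance (X (n + 1)) P * variance (Xbar n) P)) := by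
      rw [hsqrt]
      have h5 := mul_le_mul_of_nonneg_left hCS
        (show (0:ℝ) ≤ 2 * μs n by linarith [hμnn n])
      nlinarith [h5]
    have h4 : μs n ^ 2 * ∫ ω, Y (n + 1) ω ^ 2 ∂P = μs n ^ 2 * variance (X (n + 1)) P := by
      rw [hYvar (n + 1)]
    linarith [h1, h2, h3, h4]
  have hsumE : Summable fun n => ∫ ω, E n ω ∂P := by
    refine Summable.of_nonneg_of_le (fun n => integral_nonneg fun ω => abs_nonneg _)
      hEbound ?_
    exact (hser2.mul_left 2).add hser1
  have haeS : ∀ᵐ ω ∂P, Summable fun n => E n ω :=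
    ae_summable_of_summable_integral hEint (fun n ω => abs_nonneg _) hsumE
  filter_upwards [haeS] with ω hsumω
  have htend : Tendsto (fun n => Xbar n ω ^ 2) atTop (nhds 0) := by
    refine det_tendsto μs (fun n => E n ω) (fun n => Xbar n ω ^ 2) hμnn hμle1
      (fun n => sq_nonneg _) (fun n => abs_nonneg _) ?_ hμdiv hsumω
    intro n
    show Xbar (n + 1) ω ^ 2 ≤ (1 - μs n) * Xbar n ω ^ 2 + E n ω
    have h1 : Xbar (n + 1) ω ^ 2 - (1 - μs n) ^ 2 * Xbar n ω ^ 2 ≤ E n ω := le_abs_self _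
    have h2 : (1 - μs n) ^ 2 * Xbar n ω ^ 2 ≤ (1 - μs n) * Xbar n ω ^ 2 := by
      have hx : (1 - μs n) ^ 2 ≤ 1 - μs n := by
        nlinarith [mul_nonneg (sub_nonneg.2 (hμle1 n)) (hμnn n)]
      exact mul_le_mul_of_nonneg_right hx (sq_nonneg _)
    linarith
  have habs : Tendsto (fun n => |Xbar n ω|) atTop (nhds 0) := by
    have h5 : Tendsto (fun n => Real.sqrt (Xbar n ω ^ 2)) atTop (nhds (Real.sqrt 0)) :=
      (Real.continuous_sqrt.continuousAt.tendsto).comp htend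
    rw [Real.sqrt_zero] at h5
    refine h5.congr fun n => ?_
    rw [Real.sqrt_sq_eq_abs]
  exact (tendsto_zero_iff_abs_tendsto_zero _).2 habs
end
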